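/- arXiv:2101.04580 — 10 statements merged into one kernel-verified Lean document; each statement's English description precedes it below -/
import Mathlib

section
/- A unitary operator U on C^q ⊗ C^q is dual-unitary (i.e., U^{R1} is unitary) if and only if all operator Schmidt coefficients γ_j of U equal 1, equivalently if and only if the operator entanglement E(U) = 1 - (1/q⁴)·tr[(U^{R1} U^{R1†})²] attains its maximal value 1 - 1/q². -/
open Matrix

/-- Matrices on the tensor product `ℂ^q ⊗ ℂ^q`, indexed by pairs. -/
abbrev MQ (q : ℕ) := Matrix (Fin q × Fin q) (Fin q × Fin q) ℂ

/-- Realignment R1 : `⟨βα|A^{R1}|ji⟩ = ⟨iα|A|jβ⟩`. -/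
def R1 {q : ℕ} (A : MQ q) : MQ q := fun p r => A (r.2, p.2) (r.1, p.1)

/-- Realignment R2 : `⟨ij|A^{R2}|αβ⟩ = ⟨iα|A|jβ⟩`. -/
def R2 {q : ℕ} (A : MQ q) : MQ q := fun p r => A (p.1, r.1) (p.2, r.2)

/-- The swap operator `S|iα⟩ = |αi⟩`. -/
def Swap (q : ℕ) : MQ q := fun p r => if p.1 = r.2 ∧ p.2 = r.1 then 1 else 0

/-- Partial transpose on the first factor: `⟨jα|A^{T1}|iβ⟩ = ⟨iα|A|jβ⟩`. -/
def T1 {q : ℕ} (A : MQ q) : MQ q := fun p r => A (r.1, p.2) (p.1, r.2)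

/-- Partial transpose on the second factor: `⟨iβ|A^{T2}|jα⟩ = ⟨iα|A|jβ⟩`. -/
def T2 {q : ℕ} (A : MQ q) : MQ q := fun p r => A (p.1, r.2) (r.1, p.2)

/-- The operator entanglement `E(U) = 1 - (1/q⁴) tr[(U^{R1} U^{R1†})²]`. -/
noncomputable def opEnt {q : ℕ} (U : MQ q) : ℂ :=
  1 - (1 / (q : ℂ) ^ 4) * Matrix.trace ((R1 U * (R1 U)ᴴ) * (R1 U * (R1 U)ᴴ))

section Aux

variable {n : Type*} [Fintype n] [DecidableEq n]

lemma aux_trace_eq_sum_eig {A : Matrix n n ℂ} (hA : A.IsHermitian) :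
    A.trace = ∑ i, (hA.eigenvalues i : ℂ) := by
  conv_lhs => rw [hA.spectral_theorem, Unitary.conjStarAlgAut_apply]
  rw [Matrix.trace_mul_cycle, Unitary.coe_star_mul_self, one_mul, Matrix.trace_diagonal]
  rfl

lemma aux_trace_sq_eq_sum_eig {A : Matrix n n ℂ} (hA : A.IsHermitian) :
    (A * A).trace = ∑ i, ((hA.eigenvalues i : ℂ))^2 := by
  conv_lhs => rw [hA.spectral_theorem, Unitary.conjStarAlgAut_apply]
  rw [show ((hA.eigenvectorUnitary : Matrix n n ℂ) * diagonal (RCLike.ofReal ∘ hA.eigenvalues)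
      * star (hA.eigenvectorUnitary : Matrix n n ℂ)) *
      ((hA.eigenvectorUnitary : Matrix n n ℂ) * diagonal (RCLike.ofReal ∘ hA.eigenvalues)
      * star (hA.eigenvectorUnitary : Matrix n n ℂ)) =
      (hA.eigenvectorUnitary : Matrix n n ℂ) *
      (diagonal (RCLike.ofReal ∘ hA.eigenvalues) * diagonal (RCLike.ofReal ∘ hA.eigenvalues))
      * star (hA.eigenvectorUnitary : Matrix n n ℂ) by
    simp only [mul_assoc]
    congr 2
    rw [← mul_assoc (star _), Unitary.coe_star_mul_self, one_mul]]
  rw [Matrix.trace_mul_cycle, Unitary.coe_star_mul_self, one_mul,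
    Matrix.diagonal_mul_diagonal, Matrix.trace_diagonal]
  simp [sq]

lemma aux_eig_one_of_spectrum {A : Matrix n n ℂ} (hA : A.IsHermitian)
    (h : ∀ γ ∈ spectrum ℂ A, γ = 1) (i : n) : hA.eigenvalues i = 1 := by
  have h1 : (hA.eigenvalues i : ℂ) ∈ spectrum ℂ A :=
    spectrum.algebraMap_mem ℂ (hA.eigenvalues_mem_spectrum_real i)
  exact_mod_cast h _ h1

lemma aux_eq_one_of_eig_one {A : Matrix n n ℂ} (hA : A.IsHermitian)
    (h : ∀ i, hA.eigenvalues i = 1) : A = 1 := by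
  have hd : diagonal (RCLike.ofReal ∘ hA.eigenvalues) = (1 : Matrix n n ℂ) := by
    ext i j
    by_cases hij : i = j <;> simp [Matrix.diagonal, Matrix.one_apply, h, hij]
  conv_lhs => rw [hA.spectral_theorem, Unitary.conjStarAlgAut_apply]
  rw [hd, mul_one, Matrix.mem_unitaryGroup_iff.mp hA.eigenvectorUnitary.2]

end Aux

/-- a unitary `U` is dual-unitary (`U^{R1}` unitary) iff all the
operator Schmidt coefficients (the eigenvalues of `U^{R1} U^{R1†}`) equal `1`,
equivalently iff the operator entanglement attains its maximum `1 - 1/q²`. -/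
theorem dual_unitary_iff_schmidt_iff_opEnt_max (q : ℕ) (hq : 0 < q) (U : MQ q)
    (hU : U ∈ Matrix.unitaryGroup (Fin q × Fin q) ℂ) :
    (R1 U ∈ Matrix.unitaryGroup (Fin q × Fin q) ℂ ↔
      ∀ γ ∈ spectrum ℂ (R1 U * (R1 U)ᴴ), γ = 1) ∧
    (R1 U ∈ Matrix.unitaryGroup (Fin q × Fin q) ℂ ↔
      opEnt U = 1 - 1 / (q : ℂ) ^ 2) := by
  haveI : Nonempty (Fin q × Fin q) := ⟨(⟨0, hq⟩, ⟨0, hq⟩)⟩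
  have hqC : (q : ℂ) ≠ 0 := Nat.cast_ne_zero.mpr hq.ne'
  set M := R1 U with hMdef
  have hG : (M * Mᴴ).IsHermitian := isHermitian_mul_conjTranspose_self M
  have hcard : Fintype.card (Fin q × Fin q) = q ^ 2 := by
    simp [Fintype.card_prod, sq]
  -- unitary ↔ G = 1
  have hGone : M ∈ Matrix.unitaryGroup (Fin q × Fin q) ℂ ↔ M * Mᴴ = 1 := by
    rw [Matrix.mem_unitaryGroup_iff, Matrix.star_eq_conjTranspose]
  -- trace G = q²
  have htrfun : ∀ (A : MQ q), (A * Aᴴ).trace =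
      ∑ x : (Fin q × Fin q) × (Fin q × Fin q), A x.1 x.2 * star (A x.1 x.2) := by
    intro A
    simp [Matrix.trace, Matrix.mul_apply, Matrix.diag, Matrix.conjTranspose_apply,
      Fintype.sum_prod_type, mul_comm]
  have hinv : Function.Involutive
      (fun x : (Fin q × Fin q) × (Fin q × Fin q) => ((x.2.2, x.1.2), (x.2.1, x.1.1))) := by
    intro x; rfl
  have htrG : (M * Mᴴ).trace = (q : ℂ) ^ 2 := by
    have h1 : (M * Mᴴ).trace = (U * Uᴴ).trace := by
      rw [htrfun, htrfun]
      exact Fintype.sum_bijective _ hinv.bijective _ _ (fun x => rfl)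
    have hUU : U * Uᴴ = 1 := by
      have := Matrix.mem_unitaryGroup_iff.mp hU
      rwa [Matrix.star_eq_conjTranspose] at this
    rw [h1, hUU, Matrix.trace_one, hcard]
    push_cast; ring
  have hsum : ∑ i, hG.eigenvalues i = (q : ℝ) ^ 2 := by
    have h2 := aux_trace_eq_sum_eig hG
    rw [htrG] at h2
    exact_mod_cast h2.symm
  -- eigenvalues nonneg
  have hnn : ∀ i, 0 ≤ hG.eigenvalues i := by
    open scoped ComplexOrder in
    exact (Matrix.posSemidef_self_mul_conjTranspose M).eigenvalues_nonneg
  -- main: tr(G²) = q² → all eigenvalues = 1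
  have key : (M * Mᴴ * (M * Mᴴ)).trace = (q : ℂ) ^ 2 → ∀ i, hG.eigenvalues i = 1 := by
    intro htr2 i
    have h2 : ∑ i, (hG.eigenvalues i) ^ 2 = (q : ℝ) ^ 2 := by
      have := aux_trace_sq_eq_sum_eig hG
      rw [htr2] at this
      exact_mod_cast this.symm
    have hzero : ∑ j, (hG.eigenvalues j - 1) ^ 2 = 0 := by
      have hc : ∑ _j : Fin q × Fin q, (1 : ℝ) = (q : ℝ) ^ 2 := by
        rw [Finset.sum_const]
        simp [hcard]
      calc ∑ j, (hG.eigenvalues j - 1) ^ 2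
          = ∑ j, ((hG.eigenvalues j) ^ 2 - 2 * hG.eigenvalues j + 1) := by
            apply Finset.sum_congr rfl; intro j _; ring
        _ = (∑ j, (hG.eigenvalues j) ^ 2) - 2 * (∑ j, hG.eigenvalues j)
            + ∑ _j : Fin q × Fin q, (1 : ℝ) := by
            rw [Finset.sum_add_distrib, Finset.sum_sub_distrib, Finset.mul_sum]
        _ = 0 := by rw [h2, hsum, hc]; ring
    have := Finset.sum_eq_zero_iff_of_nonneg
      (fun j _ => sq_nonneg (hG.eigenvalues j - 1)) |>.mp hzero i (Finset.mem_univ i)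
    have := sq_eq_zero_iff.mp this
    linarith
  have eigToUnit : (∀ i, hG.eigenvalues i = 1) → M ∈ Matrix.unitaryGroup (Fin q × Fin q) ℂ :=
    fun h => hGone.mpr (aux_eq_one_of_eig_one hG h)
  constructor
  · constructor
    · intro h γ hγ
      rw [hGone.mp h] at hγ
      rwa [spectrum.one_eq, Set.mem_singleton_iff] at hγ
    · intro h
      exact eigToUnit (fun i => aux_eig_one_of_spectrum hG h i)
  · constructor
    · intro h
      have hG1 := hGone.mp h
      rw [opEnt, ← hMdef, hG1, one_mul, Matrix.trace_one, hcard]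
      push_cast
      field_simp
    · intro h
      apply eigToUnit
      apply key
      rw [opEnt, ← hMdef] at h
      have h4 : (q : ℂ) ^ 4 ≠ 0 := pow_ne_zero _ hqC
      have h2 : (q : ℂ) ^ 2 ≠ 0 := pow_ne_zero _ hqC
      field_simp at h
      have h' : ((q:ℂ) ^ 4 - (M * Mᴴ * (M * Mᴴ)).trace) = ((q:ℂ) ^ 2 - 1) * (q:ℂ) ^ 2 :=
        mul_right_cancel₀ h2 (by linear_combination (q:ℂ)^2 * h)
      linear_combination -h'
end

section
/- If U is a 2-unitary operator on C^q ⊗ C^q, then the superoperator M₊[U] = (1/q)(U^{T2} U^{T2†})^{R1} equals the rank-one projector |Φ⁺⟩⟨Φ⁺| onto the maximally entangled state; in particular all nontrivial eigenvalues of M₊[U] vanish. -/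
open Matrix

/-- The channel superoperator `M₊[U] = (1/q) (U^{T2} U^{T2†})^{R1}`. -/
noncomputable def Mplus {q : ℕ} (U : MQ q) : MQ q :=
  ((q : ℂ))⁻¹ • R1 (T2 U * (T2 U)ᴴ)

/-- The maximally entangled state `|Φ⁺⟩ = (1/√q) Σ_j |jj⟩`. -/
noncomputable def PhiPlus (q : ℕ) : Fin q × Fin q → ℂ :=
  fun p => if p.1 = p.2 then ((Real.sqrt q : ℝ) : ℂ)⁻¹ else 0

/-- if `U` is 2-unitary (U, U^{R1}, U^{T2} all unitary) then
`M₊[U] = |Φ⁺⟩⟨Φ⁺|`; in particular all nontrivial eigenvalues vanish. -/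
theorem Mplus_of_two_unitary (q : ℕ) (hq : 0 < q) (U : MQ q)
    (hU : U ∈ Matrix.unitaryGroup (Fin q × Fin q) ℂ)
    (hR1 : R1 U ∈ Matrix.unitaryGroup (Fin q × Fin q) ℂ)
    (hT2 : T2 U ∈ Matrix.unitaryGroup (Fin q × Fin q) ℂ) :
    Mplus U = vecMulVec (PhiPlus q) (star (PhiPlus q)) := by
  have h1 : T2 U * (T2 U)ᴴ = 1 := Matrix.mem_unitaryGroup_iff.mp hT2
  have hsq : ((Real.sqrt q : ℝ) : ℂ)⁻¹ * ((Real.sqrt q : ℝ) : ℂ)⁻¹ = ((q : ℂ))⁻¹ := by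
    rw [← mul_inv, ← Complex.ofReal_mul, Real.mul_self_sqrt (Nat.cast_nonneg q)]
    push_cast
    ring
  ext p r
  simp only [Mplus, h1, R1, vecMulVec, Matrix.smul_apply, Matrix.one_apply, PhiPlus,
    Matrix.of_apply, Pi.star_apply, smul_eq_mul]
  by_cases h1 : p.1 = p.2 <;> by_cases h2 : r.1 = r.2 <;>
    simp only [h1, h2, Prod.ext_iff, if_true, if_false, mul_zero, zero_mul,
      mul_ite, ite_mul, star_zero]
  · simp [h1, h2, Prod.ext_iff, hsq.symm]
  · rw [if_neg]; exact fun h => h2 h.1.symm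
  · rw [if_neg]; exact fun h => h1 h.2.symm
  · rw [if_neg]; exact fun h => h2 h.1.symm
end

section
/- Conversely, if U is a dual-unitary operator such that the superoperator M₊[U] = (1/q)(U^{T2} U^{T2†})^{R1} has rank one (equivalently all nontrivial eigenvalues are zero), then U^{T2} is unitary and hence U is 2-unitary. -/
open Matrix

section auxDU
open Finset
variable {q : ℕ} (hq : 0 < q) (U : MQ q)

lemma s_mul_s (hq : 0 < q) :
    ((Real.sqrt q : ℝ) : ℂ)⁻¹ * ((Real.sqrt q : ℝ) : ℂ)⁻¹ = ((q : ℂ))⁻¹ := by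
  rw [← mul_inv, ← Complex.ofReal_mul, Real.mul_self_sqrt (by positivity)]
  push_cast
  ring

lemma phi_dot (hq : 0 < q) : ∑ p : Fin q × Fin q, PhiPlus q p * PhiPlus q p = 1 := by
  have hs := s_mul_s hq
  have hq' : (q : ℂ) ≠ 0 := Nat.cast_ne_zero.mpr hq.ne'
  simp only [PhiPlus, Fintype.sum_prod_type, ite_mul, zero_mul, mul_ite, mul_zero]
  rw [Finset.sum_comm]
  simp [Finset.sum_ite_eq, hs, hq', mul_comm]

lemma phi_ne (hq : 0 < q) : PhiPlus q ≠ 0 := by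
  intro h
  have h0 : ((Real.sqrt q : ℝ) : ℂ)⁻¹ = 0 := by
    have := congrFun h (⟨0, hq⟩, ⟨0, hq⟩)
    simpa [PhiPlus] using this
  rw [inv_eq_zero, Complex.ofReal_eq_zero] at h0
  exact (Real.sqrt_pos.mpr (by exact_mod_cast hq)).ne' h0

lemma colsum (hU' : star U * U = 1) (α β : Fin q) :
    ∑ j : Fin q, ∑ a : Fin q, ∑ b : Fin q,
      U (j,b) (a,β) * star (U (j,b) (a,α)) = if α = β then (q:ℂ) else 0 := by
  have h1 : ∀ a : Fin q, ∑ j : Fin q, ∑ b : Fin q,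
      U (j,b) (a,β) * star (U (j,b) (a,α)) = (star U * U) (a,α) (a,β) := by
    intro a
    rw [Matrix.mul_apply, Fintype.sum_prod_type]
    simp [Matrix.star_apply, mul_comm]
  rw [Finset.sum_comm]
  simp only [h1, hU']
  by_cases h : α = β <;> simp [h, Matrix.one_apply, Prod.ext_iff]

lemma rowsum (hU' : U * star U = 1) (i₁ i₂ : Fin q) :
    ∑ j : Fin q, ∑ a : Fin q, ∑ b : Fin q,
      U (i₂,b) (a,j) * star (U (i₁,b) (a,j)) = if i₁ = i₂ then (q:ℂ) else 0 := by
  have h1 : ∀ b : Fin q, ∑ j : Fin q, ∑ a : Fin q,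
      U (i₂,b) (a,j) * star (U (i₁,b) (a,j)) = (U * star U) (i₂,b) (i₁,b) := by
    intro b
    rw [Matrix.mul_apply, Fintype.sum_prod_type, Finset.sum_comm]
    simp [Matrix.star_apply]
  have h2 : ∀ j : Fin q, ∑ a : Fin q, ∑ b : Fin q,
      U (i₂,b) (a,j) * star (U (i₁,b) (a,j))
      = ∑ b : Fin q, ∑ a : Fin q, U (i₂,b) (a,j) * star (U (i₁,b) (a,j)) :=
    fun j => Finset.sum_comm
  simp only [h2]
  rw [Finset.sum_comm]
  simp only [h1, hU']
  by_cases h : i₁ = i₂ <;> simp [h, Matrix.one_apply, Prod.ext_iff, eq_comm]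

lemma hM1 (hq : 0 < q) (hU' : star U * U = 1) :
    (Mplus U).mulVec (PhiPlus q) = PhiPlus q := by
  have hq' : (q : ℂ) ≠ 0 := Nat.cast_ne_zero.mpr hq.ne'
  funext p
  simp only [Mplus, Matrix.mulVec, dotProduct, Matrix.smul_apply, R1, smul_eq_mul,
    PhiPlus, Fintype.sum_prod_type, mul_ite, mul_zero]
  simp only [Finset.sum_ite_eq, Finset.mem_univ, if_true]
  have hexp : ∀ j : Fin q, (T2 U * (T2 U)ᴴ) (j, p.2) (j, p.1)
      = ∑ a : Fin q, ∑ b : Fin q, U (j,b) (a,p.2) * star (U (j,b) (a,p.1)) := by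
    intro j
    rw [Matrix.mul_apply, Fintype.sum_prod_type]
    simp [T2, Matrix.conjTranspose_apply, Matrix.star_apply]
  simp only [hexp]
  rw [← Finset.sum_mul, ← Finset.mul_sum, colsum U hU' p.1 p.2]
  by_cases h : p.1 = p.2
  · simp only [h, if_pos rfl]
    field_simp
    simp only [if_true]; ring
  · simp [h]

lemma hM2 (hq : 0 < q) (hU' : U * star U = 1) :
    Matrix.vecMul (PhiPlus q) (Mplus U) = PhiPlus q := by
  have hq' : (q : ℂ) ≠ 0 := Nat.cast_ne_zero.mpr hq.ne'
  funext r
  simp only [Mplus, Matrix.vecMul, dotProduct, Matrix.smul_apply, R1, smul_eq_mul,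
    PhiPlus, Fintype.sum_prod_type, ite_mul, zero_mul]
  simp only [Finset.sum_ite_eq, Finset.mem_univ, if_true]
  have hexp : ∀ j : Fin q, (T2 U * (T2 U)ᴴ) (r.2, j) (r.1, j)
      = ∑ a : Fin q, ∑ b : Fin q, U (r.2,b) (a,j) * star (U (r.1,b) (a,j)) := by
    intro j
    rw [Matrix.mul_apply, Fintype.sum_prod_type]
    simp [T2, Matrix.conjTranspose_apply, Matrix.star_apply]
  simp only [hexp]
  rw [← Finset.mul_sum]
  rw [show (∑ j : Fin q, ((q:ℂ))⁻¹ * ∑ a : Fin q, ∑ b : Fin q,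
      U (r.2,b) (a,j) * star (U (r.1,b) (a,j)))
    = ((q:ℂ))⁻¹ * ∑ j : Fin q, ∑ a : Fin q, ∑ b : Fin q,
      U (r.2,b) (a,j) * star (U (r.1,b) (a,j)) from (Finset.mul_sum _ _ _).symm,
    rowsum U hU' r.1 r.2]
  by_cases h : r.1 = r.2
  · simp only [h, if_pos rfl]
    field_simp
    simp only [if_true]; ring
  · simp [h]

end auxDU

/-- if `U` is dual-unitary and `M₊[U]` has rank one, then
`U^{T2}` is unitary, hence `U` is 2-unitary. -/
theorem two_unitary_of_Mplus_rank_one (q : ℕ) (hq : 0 < q) (U : MQ q)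
    (hU : U ∈ Matrix.unitaryGroup (Fin q × Fin q) ℂ)
    (hR1 : R1 U ∈ Matrix.unitaryGroup (Fin q × Fin q) ℂ)
    (hrank : (Mplus U).rank = 1) :
    T2 U ∈ Matrix.unitaryGroup (Fin q × Fin q) ℂ := by
  have hqne : (q : ℂ) ≠ 0 := Nat.cast_ne_zero.mpr hq.ne'
  have hU1 : star U * U = 1 := Matrix.mem_unitaryGroup_iff'.mp hU
  have hU2 : U * star U = 1 := Matrix.mem_unitaryGroup_iff.mp hU
  have h1 := hM1 U hq hU1
  have h2 := hM2 U hq hU2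
  have hΦ := phi_ne hq
  have hspan : Submodule.span ℂ {PhiPlus q} = LinearMap.range (Mplus U).mulVecLin := by
    apply Submodule.eq_of_le_of_finrank_le
    · rw [Submodule.span_le, Set.singleton_subset_iff]
      exact ⟨PhiPlus q, by simpa [Matrix.mulVecLin_apply] using h1⟩
    · rw [finrank_span_singleton hΦ]
      exact hrank.le
  have hentry : ∀ p r, Mplus U p r = PhiPlus q p * PhiPlus q r := by
    intro p r
    have hmem : (fun p => Mplus U p r) ∈ LinearMap.range (Mplus U).mulVecLin := by
      refine ⟨Pi.single r 1, ?_⟩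
      funext p'
      simp [Matrix.mulVecLin_apply]
    rw [← hspan, Submodule.mem_span_singleton] at hmem
    obtain ⟨c, hc⟩ := hmem
    have hMc : ∀ p', Mplus U p' r = c * PhiPlus q p' := by
      intro p'
      have := congrFun hc p'
      simpa [eq_comm] using this.symm
    have hvec : Matrix.vecMul (PhiPlus q) (Mplus U) r = c := by
      simp only [Matrix.vecMul, dotProduct, hMc]
      rw [show ∑ p', PhiPlus q p' * (c * PhiPlus q p')
          = c * ∑ p', PhiPlus q p' * PhiPlus q p' by
        rw [Finset.mul_sum]; exact Finset.sum_congr rfl fun _ _ => by ring]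
      rw [phi_dot hq, mul_one]
    have hcr : c = PhiPlus q r := hvec.symm.trans (congrFun h2 r)
    rw [hMc p, hcr, mul_comm]
  rw [Matrix.mem_unitaryGroup_iff]
  ext x y
  have h := hentry (y.2, x.2) (y.1, x.1)
  simp only [Mplus, Matrix.smul_apply, R1, smul_eq_mul, Prod.mk.eta] at h
  have hX : (T2 U * (T2 U)ᴴ) x y
      = (q:ℂ) * (PhiPlus q (y.2, x.2) * PhiPlus q (y.1, x.1)) := by
    rw [← h]
    field_simp
  show (T2 U * (T2 U)ᴴ) x y = (1 : MQ q) x y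
  rw [hX, Matrix.one_apply]
  by_cases hxy : x = y
  · subst hxy
    simp only [PhiPlus, eq_self_iff_true, if_true]
    rw [s_mul_s hq, mul_inv_cancel₀ hqne]
  · have hne : ¬(y.2 = x.2) ∨ ¬(y.1 = x.1) := by
      by_contra hcon
      push_neg at hcon
      exact hxy (Prod.ext hcon.2.symm hcon.1.symm)
    rcases hne with h' | h' <;> simp [PhiPlus, h', hxy]
end

section
/- For X = A†A and Y = BB† with A, B matrices on C^q ⊗ C^q, the Haar average over u ∈ U(q) of tr[X (u⊗u*) Y (u†⊗u^T)] equals (1/(q²-1))(tr X^{R2} tr Y^{R2} + tr X tr Y) - (1/(q(q²-1)))(tr X^{R2} tr Y + tr X tr Y^{R2}). -/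
open Matrix Kronecker MeasureTheory

noncomputable instance matrixMeasurableSpace (q : ℕ) : MeasurableSpace (Matrix (Fin q) (Fin q) ℂ) :=
  inferInstanceAs (MeasurableSpace (Fin q → Fin q → ℂ))

/-- Kronecker delta with values in `ℂ`. -/
def δ {α : Type*} [DecidableEq α] (a b : α) : ℂ := if a = b then 1 else 0

section helpers

variable {ι : Type*} [Fintype ι]

lemma sw12 (h : ι → ι → ι → ι → ℂ) :
    (∑ a, ∑ b, ∑ c, ∑ d, h a b c d) = ∑ b, ∑ a, ∑ c, ∑ d, h a b c d :=
  Finset.sum_comm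

lemma sw23 (h : ι → ι → ι → ι → ℂ) :
    (∑ a, ∑ b, ∑ c, ∑ d, h a b c d) = ∑ a, ∑ c, ∑ b, ∑ d, h a b c d :=
  Finset.sum_congr rfl fun _ _ => Finset.sum_comm

lemma sw34 (h : ι → ι → ι → ι → ℂ) :
    (∑ a, ∑ b, ∑ c, ∑ d, h a b c d) = ∑ a, ∑ b, ∑ d, ∑ c, h a b c d :=
  Finset.sum_congr rfl fun _ _ => Finset.sum_congr rfl fun _ _ => Finset.sum_comm

lemma factor (f g : ι → ι → ℂ) :
    (∑ a, ∑ b, ∑ c, ∑ d, f a b * g c d) = (∑ a, ∑ b, f a b) * (∑ c, ∑ d, g c d) := by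
  refine (sw23 (fun a b c d => f a b * g c d)).trans ?_
  rw [Finset.sum_mul_sum]
  exact Finset.sum_congr rfl fun a _ => Finset.sum_congr rfl fun c _ =>
    (Finset.sum_mul_sum _ _ _ _).symm

lemma P4 (f g : ι → ι → ℂ) :
    (∑ a, ∑ b, ∑ c, ∑ d, f a b * g d c) = (∑ a, ∑ b, f a b) * (∑ c, ∑ d, g c d) :=
  (sw34 (fun a b c d => f a b * g d c)).trans (factor f g)

lemma P3 (f g : ι → ι → ℂ) :
    (∑ a, ∑ b, ∑ c, ∑ d, f a d * g b c) = (∑ a, ∑ b, f a b) * (∑ c, ∑ d, g c d) :=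
  ((sw34 (fun a b c d => f a d * g b c)).trans
    (sw23 (fun a b c d => f a c * g b d))).trans (factor f g)

lemma P1 (f g : ι → ι → ℂ) :
    (∑ a, ∑ b, ∑ c, ∑ d, f a d * g c b) = (∑ a, ∑ b, f a b) * (∑ c, ∑ d, g c d) :=
  (((sw34 (fun a b c d => f a d * g c b)).trans
    (sw23 (fun a b c d => f a c * g d b))).trans
    (sw34 (fun a b c d => f a b * g d c))).trans (factor f g)

lemma P5 (f g : ι → ι → ℂ) :
    (∑ a, ∑ b, ∑ c, ∑ d, f c d * g a b) = (∑ a, ∑ b, f a b) * (∑ c, ∑ d, g c d) :=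
  ((sw23 (fun a b c d => f c d * g a b)).trans
    (sw12 (fun a b c d => f b d * g a c))).trans (P3 f g)

end helpers

section deltas

variable {q : ℕ}

lemma trace_expand (X Y : MQ q) (u : Matrix (Fin q) (Fin q) ℂ) :
    Matrix.trace (X * (u ⊗ₖ u.map star) * Y * (uᴴ ⊗ₖ uᵀ)) =
    ∑ p1 : Fin q × Fin q, ∑ p4 : Fin q × Fin q, ∑ p3 : Fin q × Fin q, ∑ p2 : Fin q × Fin q,
      X p1 p2 * Y p3 p4 *
        (u p2.1 p3.1 * star (u p2.2 p3.2) * u p1.2 p4.2 * star (u p1.1 p4.1)) := by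
  simp only [Matrix.trace, Matrix.diag_apply, Matrix.mul_apply, kroneckerMap_apply,
    Matrix.map_apply, Matrix.conjTranspose_apply, Matrix.transpose_apply,
    Finset.sum_mul, Finset.mul_sum]
  apply Finset.sum_congr rfl; intro p1 _
  apply Finset.sum_congr rfl; intro p4 _
  apply Finset.sum_congr rfl; intro p3 _
  apply Finset.sum_congr rfl; intro p2 _
  ring

lemma T1_s12 (X Y : MQ q) :
    (∑ p1 : Fin q × Fin q, ∑ p4 : Fin q × Fin q, ∑ p3 : Fin q × Fin q, ∑ p2 : Fin q × Fin q,
      X p1 p2 * Y p3 p4 * (δ p2.1 p2.2 * δ p3.1 p3.2 * δ p1.2 p1.1 * δ p4.2 p4.1)) =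
    Matrix.trace (R2 X) * Matrix.trace (R2 Y) := by
  simp only [Matrix.trace, Matrix.diag_apply, R2, δ, Fintype.sum_prod_type,
    mul_ite, ite_mul, mul_zero, zero_mul, mul_one, one_mul,
    Finset.sum_ite_irrel, Finset.sum_const_zero,
    Finset.sum_ite_eq, Finset.sum_ite_eq', Finset.mem_univ, if_true,
    Finset.sum_mul, Finset.mul_sum]
  exact (P1 (fun a b => X (a, a) (b, b)) (fun a b => Y (a, a) (b, b))).trans
    (P5 (fun a b => X (a, a) (b, b)) (fun a b => Y (a, a) (b, b))).symm

lemma T2_s12 (X Y : MQ q) :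
    (∑ p1 : Fin q × Fin q, ∑ p4 : Fin q × Fin q, ∑ p3 : Fin q × Fin q, ∑ p2 : Fin q × Fin q,
      X p1 p2 * Y p3 p4 * (δ p2.1 p1.1 * δ p3.1 p4.1 * δ p2.2 p1.2 * δ p3.2 p4.2)) =
    Matrix.trace X * Matrix.trace Y := by
  simp only [Matrix.trace, Matrix.diag_apply, R2, δ, Fintype.sum_prod_type,
    mul_ite, ite_mul, mul_zero, zero_mul, mul_one, one_mul,
    Finset.sum_ite_irrel, Finset.sum_const_zero,
    Finset.sum_ite_eq, Finset.sum_ite_eq', Finset.mem_univ, if_true,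
    Finset.sum_mul, Finset.mul_sum]
  exact (factor (fun a b => X (a, b) (a, b)) (fun a b => Y (a, b) (a, b))).trans
    (P5 (fun a b => X (a, b) (a, b)) (fun a b => Y (a, b) (a, b))).symm

lemma T3 (X Y : MQ q) :
    (∑ p1 : Fin q × Fin q, ∑ p4 : Fin q × Fin q, ∑ p3 : Fin q × Fin q, ∑ p2 : Fin q × Fin q,
      X p1 p2 * Y p3 p4 * (δ p2.1 p2.2 * δ p3.1 p4.1 * δ p1.2 p1.1 * δ p4.2 p3.2)) =
    Matrix.trace (R2 X) * Matrix.trace Y := by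
  simp only [Matrix.trace, Matrix.diag_apply, R2, δ, Fintype.sum_prod_type,
    mul_ite, ite_mul, mul_zero, zero_mul, mul_one, one_mul,
    Finset.sum_ite_irrel, Finset.sum_const_zero,
    Finset.sum_ite_eq, Finset.sum_ite_eq', Finset.mem_univ, if_true,
    Finset.sum_mul, Finset.mul_sum]
  exact (P3 (fun a b => X (a, a) (b, b)) (fun a b => Y (a, b) (a, b))).trans
    (P5 (fun a b => X (a, a) (b, b)) (fun a b => Y (a, b) (a, b))).symm

lemma T4 (X Y : MQ q) :
    (∑ p1 : Fin q × Fin q, ∑ p4 : Fin q × Fin q, ∑ p3 : Fin q × Fin q, ∑ p2 : Fin q × Fin q,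
      X p1 p2 * Y p3 p4 * (δ p2.1 p1.1 * δ p3.1 p3.2 * δ p2.2 p1.2 * δ p4.2 p4.1)) =
    Matrix.trace X * Matrix.trace (R2 Y) := by
  simp only [Matrix.trace, Matrix.diag_apply, R2, δ, Fintype.sum_prod_type,
    mul_ite, ite_mul, mul_zero, zero_mul, mul_one, one_mul,
    Finset.sum_ite_irrel, Finset.sum_const_zero,
    Finset.sum_ite_eq, Finset.sum_ite_eq', Finset.mem_univ, if_true,
    Finset.sum_mul, Finset.mul_sum]
  exact (P4 (fun a b => X (a, b) (a, b)) (fun a b => Y (a, a) (b, b))).trans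
    (P5 (fun a b => X (a, b) (a, b)) (fun a b => Y (a, a) (b, b))).symm

end deltas

/-- for `X = A†A`, `Y = BB†`, the Haar average (encoded through
the second-moment Weingarten formula for the measure `μ`) of
`tr[X (u⊗u*) Y (u†⊗uᵀ)]` equals
`(1/(q²-1))(tr X^{R2} tr Y^{R2} + tr X tr Y)
 - (1/(q(q²-1)))(tr X^{R2} tr Y + tr X tr Y^{R2})`. -/
theorem haar_average_trace_formula (q : ℕ) (hq : 2 ≤ q)
    (μ : Measure (Matrix (Fin q) (Fin q) ℂ)) [IsProbabilityMeasure μ]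
    (hInt : ∀ j k β γ α τ i m : Fin q,
      Integrable (fun u : Matrix (Fin q) (Fin q) ℂ =>
        u j k * star (u β γ) * u α τ * star (u i m)) μ)
    (hW : ∀ j k β γ α τ i m : Fin q,
      ∫ u, u j k * star (u β γ) * u α τ * star (u i m) ∂μ =
        (1 / ((q : ℂ) ^ 2 - 1)) *
          (δ j β * δ k γ * δ α i * δ τ m + δ j i * δ k m * δ β α * δ γ τ) -
        (1 / ((q : ℂ) * ((q : ℂ) ^ 2 - 1))) *
          (δ j β * δ k m * δ α i * δ τ γ + δ j i * δ k γ * δ β α * δ τ m))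
    (A B : MQ q) :
    ∫ u, Matrix.trace ((Aᴴ * A) * (u ⊗ₖ u.map star) * (B * Bᴴ) * (uᴴ ⊗ₖ uᵀ)) ∂μ =
      (1 / ((q : ℂ) ^ 2 - 1)) *
        (Matrix.trace (R2 (Aᴴ * A)) * Matrix.trace (R2 (B * Bᴴ)) +
          Matrix.trace (Aᴴ * A) * Matrix.trace (B * Bᴴ)) -
      (1 / ((q : ℂ) * ((q : ℂ) ^ 2 - 1))) *
        (Matrix.trace (R2 (Aᴴ * A)) * Matrix.trace (B * Bᴴ) +
          Matrix.trace (Aᴴ * A) * Matrix.trace (R2 (B * Bᴴ))) := by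
  set X : MQ q := Aᴴ * A with hXdef
  set Y : MQ q := B * Bᴴ with hYdef
  have hIntTerm : ∀ p1 p2 p3 p4 : Fin q × Fin q,
      Integrable (fun u : Matrix (Fin q) (Fin q) ℂ =>
        X p1 p2 * Y p3 p4 *
          (u p2.1 p3.1 * star (u p2.2 p3.2) * u p1.2 p4.2 * star (u p1.1 p4.1))) μ :=
    fun p1 p2 p3 p4 =>
      (hInt p2.1 p3.1 p2.2 p3.2 p1.2 p4.2 p1.1 p4.1).const_mul _
  simp only [trace_expand X Y]
  rw [integral_finset_sum _ (fun p1 _ => integrable_finset_sum _ fun p4 _ =>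
    integrable_finset_sum _ fun p3 _ => integrable_finset_sum _ fun p2 _ =>
      hIntTerm p1 p2 p3 p4)]
  have step2 : ∀ p1 : Fin q × Fin q,
      (∫ u, ∑ p4 : Fin q × Fin q, ∑ p3 : Fin q × Fin q, ∑ p2 : Fin q × Fin q,
        X p1 p2 * Y p3 p4 *
          (u p2.1 p3.1 * star (u p2.2 p3.2) * u p1.2 p4.2 * star (u p1.1 p4.1)) ∂μ) =
      ∑ p4 : Fin q × Fin q, ∑ p3 : Fin q × Fin q, ∑ p2 : Fin q × Fin q,
        X p1 p2 * Y p3 p4 *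
          ((1 / ((q : ℂ) ^ 2 - 1)) *
            (δ p2.1 p2.2 * δ p3.1 p3.2 * δ p1.2 p1.1 * δ p4.2 p4.1 +
             δ p2.1 p1.1 * δ p3.1 p4.1 * δ p2.2 p1.2 * δ p3.2 p4.2) -
           (1 / ((q : ℂ) * ((q : ℂ) ^ 2 - 1))) *
            (δ p2.1 p2.2 * δ p3.1 p4.1 * δ p1.2 p1.1 * δ p4.2 p3.2 +
             δ p2.1 p1.1 * δ p3.1 p3.2 * δ p2.2 p1.2 * δ p4.2 p4.1)) := by
    intro p1
    rw [integral_finset_sum _ (fun p4 _ => integrable_finset_sum _ fun p3 _ =>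
      integrable_finset_sum _ fun p2 _ => hIntTerm p1 p2 p3 p4)]
    refine Finset.sum_congr rfl fun p4 _ => ?_
    rw [integral_finset_sum _ (fun p3 _ => integrable_finset_sum _ fun p2 _ =>
      hIntTerm p1 p2 p3 p4)]
    refine Finset.sum_congr rfl fun p3 _ => ?_
    rw [integral_finset_sum _ (fun p2 _ => hIntTerm p1 p2 p3 p4)]
    refine Finset.sum_congr rfl fun p2 _ => ?_
    rw [integral_const_mul, hW]
  simp only [step2]
  have expand : ∀ p1 p2 p3 p4 : Fin q × Fin q,
      X p1 p2 * Y p3 p4 *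
          ((1 / ((q : ℂ) ^ 2 - 1)) *
            (δ p2.1 p2.2 * δ p3.1 p3.2 * δ p1.2 p1.1 * δ p4.2 p4.1 +
             δ p2.1 p1.1 * δ p3.1 p4.1 * δ p2.2 p1.2 * δ p3.2 p4.2) -
           (1 / ((q : ℂ) * ((q : ℂ) ^ 2 - 1))) *
            (δ p2.1 p2.2 * δ p3.1 p4.1 * δ p1.2 p1.1 * δ p4.2 p3.2 +
             δ p2.1 p1.1 * δ p3.1 p3.2 * δ p2.2 p1.2 * δ p4.2 p4.1)) =
      (1 / ((q : ℂ) ^ 2 - 1)) *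
          (X p1 p2 * Y p3 p4 * (δ p2.1 p2.2 * δ p3.1 p3.2 * δ p1.2 p1.1 * δ p4.2 p4.1)) +
        (1 / ((q : ℂ) ^ 2 - 1)) *
          (X p1 p2 * Y p3 p4 * (δ p2.1 p1.1 * δ p3.1 p4.1 * δ p2.2 p1.2 * δ p3.2 p4.2)) -
        ((1 / ((q : ℂ) * ((q : ℂ) ^ 2 - 1))) *
          (X p1 p2 * Y p3 p4 * (δ p2.1 p2.2 * δ p3.1 p4.1 * δ p1.2 p1.1 * δ p4.2 p3.2)) +
         (1 / ((q : ℂ) * ((q : ℂ) ^ 2 - 1))) *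
          (X p1 p2 * Y p3 p4 * (δ p2.1 p1.1 * δ p3.1 p3.2 * δ p2.2 p1.2 * δ p4.2 p4.1))) := by
    intros; ring
  simp only [expand, Finset.sum_add_distrib, Finset.sum_sub_distrib, ← Finset.mul_sum]
  rw [T1_s12 X Y, T2_s12 X Y, T3 X Y, T4 X Y]
  ring
end

section
/- Let A, B be operators on C^q ⊗ C^q with tr((A†A)^{R2}) = 0 and tr((BB†)^{R2}) = 0 (equivalently A|Φ⁺⟩ = 0 and B†|Φ⁺⟩ = 0, up to scaling). Then the Haar average over u ∈ U(q) of ‖A(u⊗u*)B‖²_F equals ‖A‖²_F ‖B‖²_F / (q²-1). -/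
open Matrix Kronecker MeasureTheory

-- helpers
private lemma δ_symm {α : Type*} [DecidableEq α] (a b : α) : δ a b = δ b a := by
  unfold δ; rcases eq_or_ne a b with rfl | h
  · rfl
  · rw [if_neg h, if_neg fun he => h he.symm]

private lemma δ_prod {α β : Type*} [DecidableEq α] [DecidableEq β]
    (s s' : α × β) : δ s.1 s'.1 * δ s.2 s'.2 = δ s s' := by
  by_cases h1 : s.1 = s'.1 <;> by_cases h2 : s.2 = s'.2 <;>
    simp [δ, h1, h2, Prod.ext_iff]

private lemma Hd1 {q : ℕ} (h : Fin q × Fin q → ℂ) :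
    ∑ v : Fin q × Fin q, h v * δ v.1 v.2 = ∑ x, h (x, x) := by
  rw [Fintype.sum_prod_type]
  simp [δ, mul_ite, mul_one, mul_zero]

private lemma Hd2 {q : ℕ} (h : Fin q × Fin q → ℂ) :
    ∑ v : Fin q × Fin q, h v * δ v.2 v.1 = ∑ x, h (x, x) := by
  rw [Fintype.sum_prod_type]
  simp [δ, mul_ite, mul_one, mul_zero]

private lemma Hpt {q : ℕ} (h : Fin q × Fin q → ℂ) (s : Fin q × Fin q) :
    ∑ v : Fin q × Fin q, h v * δ s v = h s := by
  simp [δ, mul_ite, mul_one, mul_zero]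

private lemma sum_factor {ι κ : Type*} [Fintype ι] [Fintype κ] (f : ι → ℂ) (g : κ → ℂ) (c : ℂ) :
    ∑ p : ι, ∑ r : κ, f p * g r * c = (∑ p, f p) * (∑ r, g r) * c := by
  conv_rhs => rw [Fintype.sum_mul_sum, Finset.sum_mul]
  exact Finset.sum_congr rfl fun p _ => by rw [Finset.sum_mul]

private lemma sum_factor4 {ι κ : Type*} [Fintype ι] [Fintype κ] (F : ι → ι → ℂ) (G : κ → κ → ℂ) :
    ∑ s : ι, ∑ t : κ, ∑ s' : ι, ∑ t' : κ, F s s' * G t t' =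
      (∑ s, ∑ s', F s s') * (∑ t, ∑ t', G t t') := by
  calc ∑ s : ι, ∑ t : κ, ∑ s' : ι, ∑ t' : κ, F s s' * G t t'
      = ∑ s : ι, ∑ t : κ, (∑ s', F s s') * (∑ t', G t t') := by
        refine Finset.sum_congr rfl fun s _ => Finset.sum_congr rfl fun t _ => ?_
        rw [Fintype.sum_mul_sum]
    _ = _ := (Fintype.sum_mul_sum _ _).symm

private lemma H1 {q : ℕ} (f : Fin q × Fin q → Fin q × Fin q → ℂ) :
    ∑ s : Fin q × Fin q, ∑ s' : Fin q × Fin q, f s s' * (δ s.1 s.2 * δ s'.2 s'.1) =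
      ∑ x, ∑ y, f (x, x) (y, y) := by
  calc ∑ s : Fin q × Fin q, ∑ s' : Fin q × Fin q, f s s' * (δ s.1 s.2 * δ s'.2 s'.1)
      = ∑ s : Fin q × Fin q, (∑ s' : Fin q × Fin q, (fun v => f s v * δ s.1 s.2) s' * δ s'.2 s'.1) := by
        refine Finset.sum_congr rfl fun s _ => Finset.sum_congr rfl fun s' _ => by ring
    _ = ∑ s : Fin q × Fin q, ((fun v => (∑ y, f v (y, y))) s * δ s.1 s.2) := by
        refine Finset.sum_congr rfl fun s _ => ?_
        rw [Hd2]
        rw [Finset.sum_mul]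
    _ = ∑ x, ∑ y, f (x, x) (y, y) := Hd1 _

private lemma H2 {q : ℕ} (f : Fin q × Fin q → Fin q × Fin q → ℂ) :
    ∑ s : Fin q × Fin q, ∑ s' : Fin q × Fin q, f s s' * (δ s.1 s'.1 * δ s.2 s'.2) =
      ∑ s, f s s := by
  refine Finset.sum_congr rfl fun s _ => ?_
  calc ∑ s' : Fin q × Fin q, f s s' * (δ s.1 s'.1 * δ s.2 s'.2)
      = ∑ s' : Fin q × Fin q, f s s' * δ s s' := by
        refine Finset.sum_congr rfl fun s' _ => by rw [δ_prod]
    _ = f s s := Hpt _ s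

private lemma H3 {q : ℕ} (g : Fin q × Fin q → Fin q × Fin q → ℂ) :
    ∑ t : Fin q × Fin q, ∑ t' : Fin q × Fin q, g t t' * (δ t.1 t'.1 * δ t'.2 t.2) =
      ∑ t, g t t := by
  calc ∑ t : Fin q × Fin q, ∑ t' : Fin q × Fin q, g t t' * (δ t.1 t'.1 * δ t'.2 t.2)
      = ∑ t : Fin q × Fin q, ∑ t' : Fin q × Fin q, g t t' * (δ t.1 t'.1 * δ t.2 t'.2) := by
        refine Finset.sum_congr rfl fun t _ => Finset.sum_congr rfl fun t' _ => by
          rw [δ_symm t'.2 t.2]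
    _ = ∑ t, g t t := H2 g

private lemma P1_s13 {q : ℕ} (f g : Fin q × Fin q → Fin q × Fin q → ℂ) :
    ∑ s : Fin q × Fin q, ∑ t : Fin q × Fin q, ∑ s' : Fin q × Fin q, ∑ t' : Fin q × Fin q,
      f s s' * g t t' * (δ s.1 s.2 * δ t.1 t.2 * δ s'.2 s'.1 * δ t'.2 t'.1) =
      (∑ x, ∑ y, f (x, x) (y, y)) * (∑ x, ∑ y, g (x, x) (y, y)) := by
  calc _ = ∑ s : Fin q × Fin q, ∑ t : Fin q × Fin q, ∑ s' : Fin q × Fin q, ∑ t' : Fin q × Fin q,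
      (f s s' * (δ s.1 s.2 * δ s'.2 s'.1)) * (g t t' * (δ t.1 t.2 * δ t'.2 t'.1)) := by
        refine Finset.sum_congr rfl fun s _ => Finset.sum_congr rfl fun t _ =>
          Finset.sum_congr rfl fun s' _ => Finset.sum_congr rfl fun t' _ => by ring
    _ = (∑ s : Fin q × Fin q, ∑ s' : Fin q × Fin q, f s s' * (δ s.1 s.2 * δ s'.2 s'.1)) *
        (∑ t : Fin q × Fin q, ∑ t' : Fin q × Fin q, g t t' * (δ t.1 t.2 * δ t'.2 t'.1)) :=
        sum_factor4 _ _
    _ = _ := by rw [H1 f, H1 g]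

private lemma P2 {q : ℕ} (f g : Fin q × Fin q → Fin q × Fin q → ℂ) :
    ∑ s : Fin q × Fin q, ∑ t : Fin q × Fin q, ∑ s' : Fin q × Fin q, ∑ t' : Fin q × Fin q,
      f s s' * g t t' * (δ s.1 s'.1 * δ t.1 t'.1 * δ s.2 s'.2 * δ t.2 t'.2) =
      (∑ s, f s s) * (∑ t, g t t) := by
  calc _ = ∑ s : Fin q × Fin q, ∑ t : Fin q × Fin q, ∑ s' : Fin q × Fin q, ∑ t' : Fin q × Fin q,
      (f s s' * (δ s.1 s'.1 * δ s.2 s'.2)) * (g t t' * (δ t.1 t'.1 * δ t.2 t'.2)) := by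
        refine Finset.sum_congr rfl fun s _ => Finset.sum_congr rfl fun t _ =>
          Finset.sum_congr rfl fun s' _ => Finset.sum_congr rfl fun t' _ => by ring
    _ = (∑ s : Fin q × Fin q, ∑ s' : Fin q × Fin q, f s s' * (δ s.1 s'.1 * δ s.2 s'.2)) *
        (∑ t : Fin q × Fin q, ∑ t' : Fin q × Fin q, g t t' * (δ t.1 t'.1 * δ t.2 t'.2)) :=
        sum_factor4 _ _
    _ = _ := by rw [H2 f, H2 g]

private lemma P3_s13 {q : ℕ} (f g : Fin q × Fin q → Fin q × Fin q → ℂ) :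
    ∑ s : Fin q × Fin q, ∑ t : Fin q × Fin q, ∑ s' : Fin q × Fin q, ∑ t' : Fin q × Fin q,
      f s s' * g t t' * (δ s.1 s.2 * δ t.1 t'.1 * δ s'.2 s'.1 * δ t'.2 t.2) =
      (∑ x, ∑ y, f (x, x) (y, y)) * (∑ t, g t t) := by
  calc _ = ∑ s : Fin q × Fin q, ∑ t : Fin q × Fin q, ∑ s' : Fin q × Fin q, ∑ t' : Fin q × Fin q,
      (f s s' * (δ s.1 s.2 * δ s'.2 s'.1)) * (g t t' * (δ t.1 t'.1 * δ t'.2 t.2)) := by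
        refine Finset.sum_congr rfl fun s _ => Finset.sum_congr rfl fun t _ =>
          Finset.sum_congr rfl fun s' _ => Finset.sum_congr rfl fun t' _ => by ring
    _ = (∑ s : Fin q × Fin q, ∑ s' : Fin q × Fin q, f s s' * (δ s.1 s.2 * δ s'.2 s'.1)) *
        (∑ t : Fin q × Fin q, ∑ t' : Fin q × Fin q, g t t' * (δ t.1 t'.1 * δ t'.2 t.2)) :=
        sum_factor4 _ _
    _ = _ := by rw [H1 f, H3 g]

private lemma P4_s13 {q : ℕ} (f g : Fin q × Fin q → Fin q × Fin q → ℂ) :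
    ∑ s : Fin q × Fin q, ∑ t : Fin q × Fin q, ∑ s' : Fin q × Fin q, ∑ t' : Fin q × Fin q,
      f s s' * g t t' * (δ s.1 s'.1 * δ t.1 t.2 * δ s.2 s'.2 * δ t'.2 t'.1) =
      (∑ s, f s s) * (∑ x, ∑ y, g (x, x) (y, y)) := by
  calc _ = ∑ s : Fin q × Fin q, ∑ t : Fin q × Fin q, ∑ s' : Fin q × Fin q, ∑ t' : Fin q × Fin q,
      (f s s' * (δ s.1 s'.1 * δ s.2 s'.2)) * (g t t' * (δ t.1 t.2 * δ t'.2 t'.1)) := by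
        refine Finset.sum_congr rfl fun s _ => Finset.sum_congr rfl fun t _ =>
          Finset.sum_congr rfl fun s' _ => Finset.sum_congr rfl fun t' _ => by ring
    _ = (∑ s : Fin q × Fin q, ∑ s' : Fin q × Fin q, f s s' * (δ s.1 s'.1 * δ s.2 s'.2)) *
        (∑ t : Fin q × Fin q, ∑ t' : Fin q × Fin q, g t t' * (δ t.1 t.2 * δ t'.2 t'.1)) :=
        sum_factor4 _ _
    _ = _ := by rw [H2 f, H1 g]

private lemma key {q : ℕ} (f g : Fin q × Fin q → Fin q × Fin q → ℂ) (c1 c2 : ℂ) :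
    ∑ z : (Fin q × Fin q) × (Fin q × Fin q), ∑ z' : (Fin q × Fin q) × (Fin q × Fin q),
      f z.1 z'.1 * g z.2 z'.2 *
        (c1 * (δ z.1.1 z.1.2 * δ z.2.1 z.2.2 * δ z'.1.2 z'.1.1 * δ z'.2.2 z'.2.1 +
               δ z.1.1 z'.1.1 * δ z.2.1 z'.2.1 * δ z.1.2 z'.1.2 * δ z.2.2 z'.2.2) -
         c2 * (δ z.1.1 z.1.2 * δ z.2.1 z'.2.1 * δ z'.1.2 z'.1.1 * δ z'.2.2 z.2.2 +
               δ z.1.1 z'.1.1 * δ z.2.1 z.2.2 * δ z.1.2 z'.1.2 * δ z'.2.2 z'.2.1)) =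
      c1 * ((∑ x, ∑ y, f (x, x) (y, y)) * (∑ x, ∑ y, g (x, x) (y, y)) +
            (∑ s, f s s) * (∑ t, g t t)) -
      c2 * ((∑ x, ∑ y, f (x, x) (y, y)) * (∑ t, g t t) +
            (∑ s, f s s) * (∑ x, ∑ y, g (x, x) (y, y))) := by
  have split : ∑ z : (Fin q × Fin q) × (Fin q × Fin q), ∑ z' : (Fin q × Fin q) × (Fin q × Fin q),
      f z.1 z'.1 * g z.2 z'.2 *
        (c1 * (δ z.1.1 z.1.2 * δ z.2.1 z.2.2 * δ z'.1.2 z'.1.1 * δ z'.2.2 z'.2.1 +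
               δ z.1.1 z'.1.1 * δ z.2.1 z'.2.1 * δ z.1.2 z'.1.2 * δ z.2.2 z'.2.2) -
         c2 * (δ z.1.1 z.1.2 * δ z.2.1 z'.2.1 * δ z'.1.2 z'.1.1 * δ z'.2.2 z.2.2 +
               δ z.1.1 z'.1.1 * δ z.2.1 z.2.2 * δ z.1.2 z'.1.2 * δ z'.2.2 z'.2.1)) =
      ∑ s : Fin q × Fin q, ∑ t : Fin q × Fin q, ∑ s' : Fin q × Fin q, ∑ t' : Fin q × Fin q,
        (c1 * (f s s' * g t t' * (δ s.1 s.2 * δ t.1 t.2 * δ s'.2 s'.1 * δ t'.2 t'.1)) +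
         c1 * (f s s' * g t t' * (δ s.1 s'.1 * δ t.1 t'.1 * δ s.2 s'.2 * δ t.2 t'.2)) -
        (c2 * (f s s' * g t t' * (δ s.1 s.2 * δ t.1 t'.1 * δ s'.2 s'.1 * δ t'.2 t.2)) +
         c2 * (f s s' * g t t' * (δ s.1 s'.1 * δ t.1 t.2 * δ s.2 s'.2 * δ t'.2 t'.1)))) := by
    rw [Fintype.sum_prod_type]
    refine Finset.sum_congr rfl fun s _ => Finset.sum_congr rfl fun t _ => ?_
    rw [Fintype.sum_prod_type]
    exact Finset.sum_congr rfl fun s' _ => Finset.sum_congr rfl fun t' _ => by ring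
  rw [split]
  simp only [Finset.sum_sub_distrib, Finset.sum_add_distrib, ← Finset.mul_sum]
  rw [P1_s13 f g, P2 f g, P3_s13 f g, P4_s13 f g]
  ring

private lemma trace_expand_s13 {q : ℕ} (A B : MQ q) (u : Matrix (Fin q) (Fin q) ℂ) :
    Matrix.trace ((A * (u ⊗ₖ u.map star) * B) * (A * (u ⊗ₖ u.map star) * B)ᴴ) =
      ∑ z : (Fin q × Fin q) × (Fin q × Fin q), ∑ z' : (Fin q × Fin q) × (Fin q × Fin q),
        (∑ p, A p z.1 * star (A p z'.1)) * (∑ r, B z.2 r * star (B z'.2 r)) *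
          (u z.1.1 z.2.1 * star (u z.1.2 z.2.2) * u z'.1.2 z'.2.2 * star (u z'.1.1 z'.2.1)) := by
  set M := A * (u ⊗ₖ u.map star) * B with hMdef
  have tr1 : Matrix.trace (M * Mᴴ) =
      ∑ w : (Fin q × Fin q) × (Fin q × Fin q), M w.1 w.2 * star (M w.1 w.2) := by
    rw [Matrix.trace]
    simp only [Matrix.diag, Matrix.mul_apply, Matrix.conjTranspose_apply]
    exact (Fintype.sum_prod_type
      (fun w : (Fin q × Fin q) × (Fin q × Fin q) => M w.1 w.2 * star (M w.1 w.2))).symm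
  have hM : ∀ p r, M p r = ∑ z : (Fin q × Fin q) × (Fin q × Fin q),
      A p z.1 * (u z.1.1 z.2.1 * star (u z.1.2 z.2.2)) * B z.2 r := by
    intro p r
    calc M p r = ∑ t, (A * (u ⊗ₖ u.map star)) p t * B t r := by rw [hMdef, Matrix.mul_apply]
      _ = ∑ t, (∑ s, A p s * (u s.1 t.1 * star (u s.2 t.2))) * B t r := by
          refine Finset.sum_congr rfl fun t _ => ?_
          rw [Matrix.mul_apply]
          rfl
      _ = ∑ t, ∑ s, A p s * (u s.1 t.1 * star (u s.2 t.2)) * B t r := by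
          exact Finset.sum_congr rfl fun t _ => Finset.sum_mul _ _ _
      _ = ∑ s, ∑ t, A p s * (u s.1 t.1 * star (u s.2 t.2)) * B t r := Finset.sum_comm
      _ = ∑ z : (Fin q × Fin q) × (Fin q × Fin q),
            A p z.1 * (u z.1.1 z.2.1 * star (u z.1.2 z.2.2)) * B z.2 r :=
          (Fintype.sum_prod_type (fun z : (Fin q × Fin q) × (Fin q × Fin q) =>
            A p z.1 * (u z.1.1 z.2.1 * star (u z.1.2 z.2.2)) * B z.2 r)).symm
  rw [tr1]
  calc ∑ w : (Fin q × Fin q) × (Fin q × Fin q), M w.1 w.2 * star (M w.1 w.2)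
      = ∑ w : (Fin q × Fin q) × (Fin q × Fin q),
          ∑ z : (Fin q × Fin q) × (Fin q × Fin q), ∑ z' : (Fin q × Fin q) × (Fin q × Fin q),
          (A w.1 z.1 * (u z.1.1 z.2.1 * star (u z.1.2 z.2.2)) * B z.2 w.2) *
            star (A w.1 z'.1 * (u z'.1.1 z'.2.1 * star (u z'.1.2 z'.2.2)) * B z'.2 w.2) := by
        refine Finset.sum_congr rfl fun w _ => ?_
        rw [hM, star_sum, Fintype.sum_mul_sum]
    _ = ∑ z : (Fin q × Fin q) × (Fin q × Fin q), ∑ z' : (Fin q × Fin q) × (Fin q × Fin q),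
          ∑ w : (Fin q × Fin q) × (Fin q × Fin q),
          (A w.1 z.1 * (u z.1.1 z.2.1 * star (u z.1.2 z.2.2)) * B z.2 w.2) *
            star (A w.1 z'.1 * (u z'.1.1 z'.2.1 * star (u z'.1.2 z'.2.2)) * B z'.2 w.2) := by
        rw [Finset.sum_comm]
        exact Finset.sum_congr rfl fun z _ => Finset.sum_comm
    _ = _ := by
        refine Finset.sum_congr rfl fun z _ => Finset.sum_congr rfl fun z' _ => ?_
        calc ∑ w : (Fin q × Fin q) × (Fin q × Fin q),
              (A w.1 z.1 * (u z.1.1 z.2.1 * star (u z.1.2 z.2.2)) * B z.2 w.2) *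
                star (A w.1 z'.1 * (u z'.1.1 z'.2.1 * star (u z'.1.2 z'.2.2)) * B z'.2 w.2)
            = ∑ p, ∑ r,
              (A p z.1 * (u z.1.1 z.2.1 * star (u z.1.2 z.2.2)) * B z.2 r) *
                star (A p z'.1 * (u z'.1.1 z'.2.1 * star (u z'.1.2 z'.2.2)) * B z'.2 r) :=
              Fintype.sum_prod_type (fun w : (Fin q × Fin q) × (Fin q × Fin q) =>
                (A w.1 z.1 * (u z.1.1 z.2.1 * star (u z.1.2 z.2.2)) * B z.2 w.2) *
                  star (A w.1 z'.1 * (u z'.1.1 z'.2.1 * star (u z'.1.2 z'.2.2)) * B z'.2 w.2))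
          _ = ∑ p, ∑ r, (A p z.1 * star (A p z'.1)) * (B z.2 r * star (B z'.2 r)) *
                (u z.1.1 z.2.1 * star (u z.1.2 z.2.2) * u z'.1.2 z'.2.2 * star (u z'.1.1 z'.2.1)) := by
              refine Finset.sum_congr rfl fun p _ => Finset.sum_congr rfl fun r _ => ?_
              simp only [star_mul', star_star]
              ring
          _ = _ := sum_factor _ _ _

private lemma traceR2_A {q : ℕ} (A : MQ q) :
    Matrix.trace (R2 (Aᴴ * A)) = ∑ x, ∑ y, ∑ p, star (A p (x, x)) * A p (y, y) := by
  rw [Matrix.trace]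
  simp only [Matrix.diag, R2, Matrix.mul_apply, Matrix.conjTranspose_apply]
  exact Fintype.sum_prod_type
    (fun w : Fin q × Fin q => ∑ p, star (A p (w.1, w.1)) * A p (w.2, w.2))

private lemma traceR2_B {q : ℕ} (B : MQ q) :
    Matrix.trace (R2 (B * Bᴴ)) = ∑ x, ∑ y, ∑ r, B (x, x) r * star (B (y, y) r) := by
  rw [Matrix.trace]
  simp only [Matrix.diag, R2, Matrix.mul_apply, Matrix.conjTranspose_apply]
  exact Fintype.sum_prod_type
    (fun w : Fin q × Fin q => ∑ r, B (w.1, w.1) r * star (B (w.2, w.2) r))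

private lemma traceA {q : ℕ} (A : MQ q) :
    Matrix.trace (A * Aᴴ) = ∑ s : Fin q × Fin q, ∑ p, A p s * star (A p s) := by
  rw [Matrix.trace]
  simp only [Matrix.diag, Matrix.mul_apply, Matrix.conjTranspose_apply]
  exact Finset.sum_comm

private lemma traceB {q : ℕ} (B : MQ q) :
    Matrix.trace (B * Bᴴ) = ∑ t : Fin q × Fin q, ∑ r, B t r * star (B t r) := by
  rw [Matrix.trace]
  simp only [Matrix.diag, Matrix.mul_apply, Matrix.conjTranspose_apply]

private lemma trace_real {q : ℕ} (A : MQ q) :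
    Matrix.trace (A * Aᴴ) = ((Matrix.trace (A * Aᴴ)).re : ℂ) := by
  have h1 : (starRingEnd ℂ) (Matrix.trace (A * Aᴴ)) = Matrix.trace (A * Aᴴ) := by
    have h := Matrix.trace_conjTranspose (A * Aᴴ)
    rw [Matrix.conjTranspose_mul, Matrix.conjTranspose_conjTranspose] at h
    exact h.symm
  exact (Complex.conj_eq_iff_re.mp h1).symm


/-- if `tr((A†A)^{R2}) = 0` and `tr((BB†)^{R2}) = 0`, then the
Haar average (encoded by the second-moment Weingarten formula for `μ`) of the
squared Frobenius norm `‖A (u⊗u*) B‖²_F` equals `‖A‖²_F ‖B‖²_F / (q²-1)`. -/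
theorem haar_average_norm_product (q : ℕ) (hq : 2 ≤ q)
    (μ : Measure (Matrix (Fin q) (Fin q) ℂ)) [IsProbabilityMeasure μ]
    (hInt : ∀ j k β γ α τ i m : Fin q,
      Integrable (fun u : Matrix (Fin q) (Fin q) ℂ =>
        u j k * star (u β γ) * u α τ * star (u i m)) μ)
    (hW : ∀ j k β γ α τ i m : Fin q,
      ∫ u, u j k * star (u β γ) * u α τ * star (u i m) ∂μ =
        (1 / ((q : ℂ) ^ 2 - 1)) *
          (δ j β * δ k γ * δ α i * δ τ m + δ j i * δ k m * δ β α * δ γ τ) -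
        (1 / ((q : ℂ) * ((q : ℂ) ^ 2 - 1))) *
          (δ j β * δ k m * δ α i * δ τ γ + δ j i * δ k γ * δ β α * δ τ m))
    (A B : MQ q)
    (hA : Matrix.trace (R2 (Aᴴ * A)) = 0)
    (hB : Matrix.trace (R2 (B * Bᴴ)) = 0) :
    ∫ u, (Matrix.trace ((A * (u ⊗ₖ u.map star) * B) *
        (A * (u ⊗ₖ u.map star) * B)ᴴ)).re ∂μ =
      (Matrix.trace (A * Aᴴ)).re * (Matrix.trace (B * Bᴴ)).re / ((q : ℝ) ^ 2 - 1) := by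
  classical
  have hintegrand : ∀ z z' : (Fin q × Fin q) × (Fin q × Fin q),
      Integrable (fun u : Matrix (Fin q) (Fin q) ℂ =>
        (∑ p, A p z.1 * star (A p z'.1)) * (∑ r, B z.2 r * star (B z'.2 r)) *
          (u z.1.1 z.2.1 * star (u z.1.2 z.2.2) * u z'.1.2 z'.2.2 * star (u z'.1.1 z'.2.1))) μ :=
    fun z z' => (hInt z.1.1 z.2.1 z.1.2 z.2.2 z'.1.2 z'.2.2 z'.1.1 z'.2.1).const_mul
      ((∑ p, A p z.1 * star (A p z'.1)) * (∑ r, B z.2 r * star (B z'.2 r)))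
  have hsum2 : Integrable (fun u : Matrix (Fin q) (Fin q) ℂ =>
      ∑ z : (Fin q × Fin q) × (Fin q × Fin q), ∑ z' : (Fin q × Fin q) × (Fin q × Fin q),
        (∑ p, A p z.1 * star (A p z'.1)) * (∑ r, B z.2 r * star (B z'.2 r)) *
          (u z.1.1 z.2.1 * star (u z.1.2 z.2.2) * u z'.1.2 z'.2.2 * star (u z'.1.1 z'.2.1))) μ :=
    integrable_finset_sum _ fun z _ => integrable_finset_sum _ fun z' _ => hintegrand z z'
  -- the value of the complex integral
  have hfa : (∑ x, ∑ y, ∑ p, A p (x, x) * star (A p (y, y))) = 0 := by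
    have h1 : (∑ x, ∑ y, ∑ p, A p (x, x) * star (A p (y, y))) =
        ∑ x, ∑ y, ∑ p, star (A p (x, x)) * A p (y, y) := by
      rw [Finset.sum_comm]
      exact Finset.sum_congr rfl fun x _ => Finset.sum_congr rfl fun y _ =>
        Finset.sum_congr rfl fun p _ => mul_comm _ _
    rw [h1, ← traceR2_A A, hA]
  have hgb : (∑ x, ∑ y, ∑ r, B (x, x) r * star (B (y, y) r)) = 0 := by
    rw [← traceR2_B B, hB]
  have hval : (∫ u, ∑ z : (Fin q × Fin q) × (Fin q × Fin q),
      ∑ z' : (Fin q × Fin q) × (Fin q × Fin q),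
        (∑ p, A p z.1 * star (A p z'.1)) * (∑ r, B z.2 r * star (B z'.2 r)) *
          (u z.1.1 z.2.1 * star (u z.1.2 z.2.2) * u z'.1.2 z'.2.2 * star (u z'.1.1 z'.2.1)) ∂μ) =
      (1 / ((q : ℂ) ^ 2 - 1)) * (Matrix.trace (A * Aᴴ) * Matrix.trace (B * Bᴴ)) := by
    rw [integral_finset_sum _ fun z _ => integrable_finset_sum _ fun z' _ => hintegrand z z']
    calc ∑ z : (Fin q × Fin q) × (Fin q × Fin q), ∫ u,
          ∑ z' : (Fin q × Fin q) × (Fin q × Fin q),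
          (∑ p, A p z.1 * star (A p z'.1)) * (∑ r, B z.2 r * star (B z'.2 r)) *
            (u z.1.1 z.2.1 * star (u z.1.2 z.2.2) * u z'.1.2 z'.2.2 * star (u z'.1.1 z'.2.1)) ∂μ
        = ∑ z : (Fin q × Fin q) × (Fin q × Fin q), ∑ z' : (Fin q × Fin q) × (Fin q × Fin q),
          ∫ u, (∑ p, A p z.1 * star (A p z'.1)) * (∑ r, B z.2 r * star (B z'.2 r)) *
            (u z.1.1 z.2.1 * star (u z.1.2 z.2.2) * u z'.1.2 z'.2.2 * star (u z'.1.1 z'.2.1)) ∂μ := by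
          exact Finset.sum_congr rfl fun z _ =>
            integral_finset_sum _ fun z' _ => hintegrand z z'
      _ = ∑ z : (Fin q × Fin q) × (Fin q × Fin q), ∑ z' : (Fin q × Fin q) × (Fin q × Fin q),
          (∑ p, A p z.1 * star (A p z'.1)) * (∑ r, B z.2 r * star (B z'.2 r)) *
            ∫ u, u z.1.1 z.2.1 * star (u z.1.2 z.2.2) * u z'.1.2 z'.2.2 * star (u z'.1.1 z'.2.1) ∂μ := by
          exact Finset.sum_congr rfl fun z _ => Finset.sum_congr rfl fun z' _ =>
            integral_const_mul _ _
      _ = ∑ z : (Fin q × Fin q) × (Fin q × Fin q), ∑ z' : (Fin q × Fin q) × (Fin q × Fin q),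
          (∑ p, A p z.1 * star (A p z'.1)) * (∑ r, B z.2 r * star (B z'.2 r)) *
            ((1 / ((q : ℂ) ^ 2 - 1)) *
              (δ z.1.1 z.1.2 * δ z.2.1 z.2.2 * δ z'.1.2 z'.1.1 * δ z'.2.2 z'.2.1 +
               δ z.1.1 z'.1.1 * δ z.2.1 z'.2.1 * δ z.1.2 z'.1.2 * δ z.2.2 z'.2.2) -
             (1 / ((q : ℂ) * ((q : ℂ) ^ 2 - 1))) *
              (δ z.1.1 z.1.2 * δ z.2.1 z'.2.1 * δ z'.1.2 z'.1.1 * δ z'.2.2 z.2.2 +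
               δ z.1.1 z'.1.1 * δ z.2.1 z.2.2 * δ z.1.2 z'.1.2 * δ z'.2.2 z'.2.1)) := by
          exact Finset.sum_congr rfl fun z _ => Finset.sum_congr rfl fun z' _ => by
            rw [hW z.1.1 z.2.1 z.1.2 z.2.2 z'.1.2 z'.2.2 z'.1.1 z'.2.1]
      _ = (1 / ((q : ℂ) ^ 2 - 1)) *
            ((∑ x, ∑ y, ∑ p, A p (x, x) * star (A p (y, y))) *
              (∑ x, ∑ y, ∑ r, B (x, x) r * star (B (y, y) r)) +
             (∑ s : Fin q × Fin q, ∑ p, A p s * star (A p s)) *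
              (∑ t : Fin q × Fin q, ∑ r, B t r * star (B t r))) -
          (1 / ((q : ℂ) * ((q : ℂ) ^ 2 - 1))) *
            ((∑ x, ∑ y, ∑ p, A p (x, x) * star (A p (y, y))) *
              (∑ t : Fin q × Fin q, ∑ r, B t r * star (B t r)) +
             (∑ s : Fin q × Fin q, ∑ p, A p s * star (A p s)) *
              (∑ x, ∑ y, ∑ r, B (x, x) r * star (B (y, y) r))) :=
          key (fun s s' => ∑ p, A p s * star (A p s'))
            (fun t t' => ∑ r, B t r * star (B t' r)) _ _
      _ = (1 / ((q : ℂ) ^ 2 - 1)) * (Matrix.trace (A * Aᴴ) * Matrix.trace (B * Bᴴ)) := by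
          rw [hfa, hgb, ← traceA A, ← traceB B]
          ring
  -- pass to real parts
  simp only [trace_expand_s13 A B]
  have hre : (∫ u, (∑ z : (Fin q × Fin q) × (Fin q × Fin q),
      ∑ z' : (Fin q × Fin q) × (Fin q × Fin q),
        (∑ p, A p z.1 * star (A p z'.1)) * (∑ r, B z.2 r * star (B z'.2 r)) *
          (u z.1.1 z.2.1 * star (u z.1.2 z.2.2) * u z'.1.2 z'.2.2 * star (u z'.1.1 z'.2.1))).re ∂μ) =
      (∫ u, ∑ z : (Fin q × Fin q) × (Fin q × Fin q),
      ∑ z' : (Fin q × Fin q) × (Fin q × Fin q),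
        (∑ p, A p z.1 * star (A p z'.1)) * (∑ r, B z.2 r * star (B z'.2 r)) *
          (u z.1.1 z.2.1 * star (u z.1.2 z.2.2) * u z'.1.2 z'.2.2 * star (u z'.1.1 z'.2.1)) ∂μ).re := by
    simp_rw [← RCLike.re_to_complex]
    exact integral_re hsum2
  rw [hre, hval]
  rw [trace_real A, trace_real B]
  have hc : ((q : ℂ) ^ 2 - 1) = (((q : ℝ) ^ 2 - 1 : ℝ) : ℂ) := by push_cast; ring
  rw [hc]
  set x := (Matrix.trace (A * Aᴴ)).re
  set y := (Matrix.trace (B * Bᴴ)).re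
  simp only [Complex.ofReal_re, ← Complex.ofReal_mul, ← Complex.ofReal_one,
    ← Complex.ofReal_div]
  ring
end

section
/- A permutation operator P on C^q ⊗ C^q given by P|i⟩|j⟩ = |k_{ij}⟩|l_{ij}⟩ is dual-unitary (P^{R2} unitary) if and only if for each fixed i the map j ↦ k_{ij} is injective and for each fixed j the map i ↦ l_{ij} is injective. -/
open Matrix

/-- The permutation operator `P|i⟩|j⟩ = |k_{ij}⟩|l_{ij}⟩`. -/
def Pmat {q : ℕ} (k l : Fin q → Fin q → Fin q) : MQ q :=
  fun p r => if p.1 = k r.1 r.2 ∧ p.2 = l r.1 r.2 then 1 else 0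

/-- the permutation operator `P` is dual-unitary (`P^{R2}`
unitary) iff for each `i` the map `j ↦ k_{ij}` is injective and for each `j`
the map `i ↦ l_{ij}` is injective. -/
theorem permutation_dual_unitary_iff (q : ℕ) (k l : Fin q → Fin q → Fin q)
    (hbij : Function.Bijective (fun p : Fin q × Fin q => (k p.1 p.2, l p.1 p.2))) :
    R2 (Pmat k l) ∈ Matrix.unitaryGroup (Fin q × Fin q) ℂ ↔
      ((∀ i, Function.Injective (fun j => k i j)) ∧
        (∀ j, Function.Injective (fun i => l i j))) := by
  classical
  set M := R2 (Pmat k l) with hMdef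
  have hM : ∀ i j α β : Fin q, M (i,j) (α,β) =
      if i = k j β ∧ α = l j β then 1 else 0 := fun _ _ _ _ => rfl
  have key : ∀ α β α' β' : Fin q,
      (star M * M) ((α,β)) ((α',β')) =
      ((Finset.univ.filter (fun p : Fin q × Fin q =>
        (p.1 = k p.2 β ∧ α = l p.2 β) ∧ (p.1 = k p.2 β' ∧ α' = l p.2 β'))).card : ℂ) := by
    intro α β α' β'
    rw [Matrix.mul_apply, Finset.card_filter]
    push_cast
    apply Finset.sum_congr rfl
    intro p _
    have h1 : (star M) (α, β) p = star (M p (α, β)) := rfl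
    rw [h1]
    obtain ⟨r, s⟩ := p
    rw [hM, hM]
    by_cases c1 : r = k s β ∧ α = l s β <;>
      by_cases c2 : r = k s β' ∧ α' = l s β' <;>
      simp [c1, c2]
  rw [Matrix.mem_unitaryGroup_iff']
  constructor
  · intro h
    constructor
    · intro i j j' hk
      simp only at hk
      by_contra hne
      have h1 := congrFun (congrFun h (l i j, j)) (l i j', j')
      rw [key] at h1
      have hne2 : ((l i j, j) : Fin q × Fin q) ≠ (l i j', j') := by
        intro he
        exact hne (congrArg Prod.snd he)
      rw [Matrix.one_apply_ne hne2] at h1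
      have hmem : ((k i j, i) : Fin q × Fin q) ∈ Finset.univ.filter
          (fun p : Fin q × Fin q =>
            (p.1 = k p.2 j ∧ l i j = l p.2 j) ∧ (p.1 = k p.2 j' ∧ l i j' = l p.2 j')) := by
        simp [hk]
      have hcard : (Finset.univ.filter (fun p : Fin q × Fin q =>
            (p.1 = k p.2 j ∧ l i j = l p.2 j) ∧ (p.1 = k p.2 j' ∧ l i j' = l p.2 j'))).card = 0 := by
        exact_mod_cast h1
      rw [Finset.card_eq_zero] at hcard
      rw [hcard] at hmem
      exact absurd hmem (Finset.notMem_empty _)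
    · intro β i i' hlh
      simp only at hlh
      have h1 := congrFun (congrFun h (l i β, β)) (l i β, β)
      rw [key, Matrix.one_apply_eq] at h1
      have hcard : (Finset.univ.filter (fun p : Fin q × Fin q =>
            (p.1 = k p.2 β ∧ l i β = l p.2 β) ∧ (p.1 = k p.2 β ∧ l i β = l p.2 β))).card = 1 := by
        exact_mod_cast h1
      have hsub := Finset.card_le_one.mp (le_of_eq hcard)
      have m1 : ((k i β, i) : Fin q × Fin q) ∈ Finset.univ.filter
          (fun p : Fin q × Fin q =>
            (p.1 = k p.2 β ∧ l i β = l p.2 β) ∧ (p.1 = k p.2 β ∧ l i β = l p.2 β)) := by simp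
      have m2 : ((k i' β, i') : Fin q × Fin q) ∈ Finset.univ.filter
          (fun p : Fin q × Fin q =>
            (p.1 = k p.2 β ∧ l i β = l p.2 β) ∧ (p.1 = k p.2 β ∧ l i β = l p.2 β)) := by
        simp [hlh]
      have := hsub _ m1 _ m2
      exact congrArg Prod.snd this
  · rintro ⟨hk, hl⟩
    ext ⟨α, β⟩ ⟨α', β'⟩
    rw [key]
    by_cases hcase : ((α, β) : Fin q × Fin q) = (α', β')
    · obtain ⟨h1, h2⟩ := Prod.mk.injEq .. ▸ hcase
      subst h1; subst h2
      rw [Matrix.one_apply_eq]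
      have hbl : Function.Bijective (fun i => l i β) :=
        Finite.injective_iff_bijective.mp (hl β)
      obtain ⟨s0, hs0⟩ := hbl.surjective α
      simp only at hs0
      norm_cast
      rw [Finset.card_eq_one]
      refine ⟨(k s0 β, s0), ?_⟩
      ext ⟨r, s⟩
      simp only [Finset.mem_filter, Finset.mem_univ, true_and, Finset.mem_singleton,
        Prod.mk.injEq, and_self]
      constructor
      · rintro ⟨hr, hα⟩
        have hs : s = s0 := hl β (hα.symm.trans hs0.symm)
        subst hs
        exact ⟨hr, rfl⟩
      · rintro ⟨hr, hs⟩
        subst hs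
        exact ⟨hr, hs0.symm⟩
    · rw [Matrix.one_apply_ne hcase]
      norm_cast
      rw [Finset.card_eq_zero, Finset.eq_empty_iff_forall_notMem]
      rintro ⟨r, s⟩ hmem
      simp only [Finset.mem_filter, Finset.mem_univ, true_and] at hmem
      obtain ⟨⟨hr1, ha1⟩, ⟨hr2, ha2⟩⟩ := hmem
      have hbb : β = β' := hk s (hr1.symm.trans hr2)
      subst hbb
      exact hcase (by rw [ha1, ha2])
end

section
/- A permutation operator P|i⟩|j⟩ = |k_{ij}⟩|l_{ij}⟩ on C^q ⊗ C^q is 2-unitary if and only if the matrices K = (k_{ij}) and L = (l_{ij}) are both Latin squares (each row and each column of each matrix contains distinct entries); together with the bijectivity of (i,j) ↦ (k_{ij}, l_{ij}) this means K and L are mutually orthogonal Latin squares. -/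
open Matrix

lemma unitary_of_indicator {I : Type*} [Fintype I] [DecidableEq I]
    (A : Matrix I I ℂ) (e : I → I) (he : Function.Injective e)
    (h : ∀ p r, A p r = if p = e r then 1 else 0) :
    A ∈ Matrix.unitaryGroup I ℂ := by
  rw [Matrix.mem_unitaryGroup_iff']
  ext r r'
  simp only [Matrix.mul_apply, Matrix.star_apply, h, Matrix.one_apply,
    apply_ite (star : ℂ → ℂ), star_one, star_zero, ite_mul, one_mul, zero_mul,
    mul_ite, mul_one, mul_zero]
  simp [Finset.sum_ite_eq', he.eq_iff, eq_comm]

lemma rows_unique {I : Type*} [Fintype I] [DecidableEq I]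
    (A : Matrix I I ℂ) (hA : A ∈ Matrix.unitaryGroup I ℂ)
    (cond : I → I → Prop) [∀ p, DecidablePred (cond p)]
    (h : ∀ p r, A p r = if cond p r then 1 else 0) :
    ∀ p r r', cond p r → cond p r' → r = r' := by
  intro p r r' hr hr'
  have h1 : (A * star A) p p = (1 : Matrix I I ℂ) p p := by
    rw [Matrix.mem_unitaryGroup_iff.mp hA]
  simp only [Matrix.mul_apply, Matrix.star_apply, h, Matrix.one_apply_eq,
    apply_ite (star : ℂ → ℂ), star_one, star_zero, ite_mul, one_mul, zero_mul,
    mul_ite, mul_one, mul_zero, ← ite_and, and_self] at h1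
  rw [Finset.sum_boole] at h1
  have hc : (Finset.univ.filter (cond p)).card = 1 := by exact_mod_cast h1
  exact Finset.card_le_one.mp hc.le r (by simp [hr]) r' (by simp [hr'])

lemma cols_unique {I : Type*} [Fintype I] [DecidableEq I]
    (A : Matrix I I ℂ) (hA : A ∈ Matrix.unitaryGroup I ℂ)
    (cond : I → I → Prop) [∀ p, DecidablePred (cond p)]
    (h : ∀ p r, A p r = if cond p r then 1 else 0) :
    ∀ r p p', cond p r → cond p' r → p = p' := by
  intro r p p' hp hp'
  have h1 : (star A * A) r r = (1 : Matrix I I ℂ) r r := by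
    rw [Matrix.mem_unitaryGroup_iff'.mp hA]
  simp only [Matrix.mul_apply, Matrix.star_apply, h, Matrix.one_apply_eq,
    apply_ite (star : ℂ → ℂ), star_one, star_zero, ite_mul, one_mul, zero_mul,
    mul_ite, mul_one, mul_zero, ← ite_and, and_self] at h1
  rw [Finset.sum_boole] at h1
  have hc : (Finset.univ.filter (fun p => cond p r)).card = 1 := by exact_mod_cast h1
  exact Finset.card_le_one.mp hc.le p (by simp [hp]) p' (by simp [hp'])

/-- the permutation operator `P` is 2-unitary (`P`, `P^{R2}`,
`P^{T2}` all unitary) iff `K = (k_{ij})` and `L = (l_{ij})` are both Latin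
squares, i.e. each row and each column of `K` and of `L` has distinct
entries (which, with the bijectivity of `(i,j) ↦ (k_{ij}, l_{ij})`, makes
them mutually orthogonal Latin squares). -/
theorem permutation_two_unitary_iff_latin_squares (q : ℕ)
    (k l : Fin q → Fin q → Fin q)
    (hbij : Function.Bijective (fun p : Fin q × Fin q => (k p.1 p.2, l p.1 p.2))) :
    (Pmat k l ∈ Matrix.unitaryGroup (Fin q × Fin q) ℂ ∧
      R2 (Pmat k l) ∈ Matrix.unitaryGroup (Fin q × Fin q) ℂ ∧
      T2 (Pmat k l) ∈ Matrix.unitaryGroup (Fin q × Fin q) ℂ) ↔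
    ((∀ i, Function.Injective (fun j => k i j)) ∧
      (∀ j, Function.Injective (fun i => k i j)) ∧
      (∀ i, Function.Injective (fun j => l i j)) ∧
      (∀ j, Function.Injective (fun i => l i j))) := by
  have hR : ∀ (p r : Fin q × Fin q),
      R2 (Pmat k l) p r = if p.1 = k p.2 r.2 ∧ r.1 = l p.2 r.2 then 1 else 0 := by
    intro p r; rfl
  have hT : ∀ (p r : Fin q × Fin q),
      T2 (Pmat k l) p r = if p.1 = k r.1 p.2 ∧ r.2 = l r.1 p.2 then 1 else 0 := by
    intro p r; rfl
  constructor
  · rintro ⟨-, hRu, hTu⟩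
    refine ⟨?_, ?_, ?_, ?_⟩
    · -- rows of K, from rows of R2
      intro i β β' hb
      have := rows_unique (R2 (Pmat k l)) hRu _ hR (k i β, i) (l i β, β) (l i β', β')
        ⟨rfl, rfl⟩ ⟨hb, rfl⟩
      exact congrArg Prod.snd this
    · -- columns of K, from rows of T2
      intro b j j' hj
      have := rows_unique (T2 (Pmat k l)) hTu _ hT (k j b, b) (j, l j b) (j', l j' b)
        ⟨rfl, rfl⟩ ⟨hj, rfl⟩
      exact congrArg Prod.fst this
    · -- rows of L, from columns of T2
      intro j b b' hb
      have := cols_unique (T2 (Pmat k l)) hTu _ hT (j, l j b) (k j b, b) (k j b', b')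
        ⟨rfl, rfl⟩ ⟨rfl, hb⟩
      exact congrArg Prod.snd this
    · -- columns of L, from columns of R2
      intro b α α' ha
      have := cols_unique (R2 (Pmat k l)) hRu _ hR (l α b, b) (k α b, α) (k α' b, α')
        ⟨rfl, rfl⟩ ⟨rfl, ha⟩
      exact congrArg Prod.snd this
  · rintro ⟨hK1, hK2, hL1, hL2⟩
    refine ⟨?_, ?_, ?_⟩
    · refine unitary_of_indicator _ (fun r => (k r.1 r.2, l r.1 r.2)) hbij.1 ?_
      intro p r
      simp only [Pmat, Prod.ext_iff]
    · -- R2 unitary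
      set EL : Fin q → (Fin q ≃ Fin q) := fun b =>
        Equiv.ofBijective (fun α => l α b) (Finite.injective_iff_bijective.mp (hL2 b)) with hEL
      have hELa : ∀ b α, EL b α = l α b := fun _ _ => rfl
      refine unitary_of_indicator _
        (fun r => ((k ((EL r.2).symm r.1) r.2), (EL r.2).symm r.1)) ?_ ?_
      · rintro ⟨j, b⟩ ⟨j', b'⟩ he
        simp only [Prod.mk.injEq] at he
        obtain ⟨h1, h2⟩ := he
        rw [h2] at h1
        have hb : b = b' := hK1 ((EL b').symm j') h1
        subst hb
        have : j = j' := by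
          have := congrArg (EL b) h2
          simpa using this
        simp [this]
      · rintro ⟨i, α⟩ ⟨j, b⟩
        rw [hR]
        congr 1
        simp only [Prod.ext_iff, eq_iff_iff]
        constructor
        · rintro ⟨h1, h2⟩
          have hα : (EL b).symm j = α := by
            rw [Equiv.symm_apply_eq]; exact h2
          exact ⟨by rw [hα]; exact h1, hα.symm⟩
        · rintro ⟨h1, h2⟩
          refine ⟨by rw [h2]; exact h1, ?_⟩
          rw [h2, ← hELa b, Equiv.apply_symm_apply]
    · -- T2 unitary
      set EL : Fin q → (Fin q ≃ Fin q) := fun j =>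
        Equiv.ofBijective (fun b => l j b) (Finite.injective_iff_bijective.mp (hL1 j)) with hEL
      have hELa : ∀ j b, EL j b = l j b := fun _ _ => rfl
      refine unitary_of_indicator _
        (fun r => ((k r.1 ((EL r.1).symm r.2)), (EL r.1).symm r.2)) ?_ ?_
      · rintro ⟨j, α⟩ ⟨j', α'⟩ he
        simp only [Prod.mk.injEq] at he
        obtain ⟨h1, h2⟩ := he
        rw [h2] at h1
        have hj : j = j' := hK2 ((EL j').symm α') h1
        subst hj
        have : α = α' := by
          have := congrArg (EL j) h2
          simpa using this
        simp [this]
      · rintro ⟨i, b⟩ ⟨j, α⟩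
        rw [hT]
        congr 1
        simp only [Prod.ext_iff, eq_iff_iff]
        constructor
        · rintro ⟨h1, h2⟩
          have hb : (EL j).symm α = b := by
            rw [Equiv.symm_apply_eq]; exact h2
          exact ⟨by rw [hb]; exact h1, hb.symm⟩
        · rintro ⟨h1, h2⟩
          refine ⟨by rw [h2]; exact h1, ?_⟩
          rw [h2, ← hELa j, Equiv.apply_symm_apply]
end

section
/- The coupled quantum cat map U_C on C^q ⊗ C^q with matrix elements ⟨kα|U_C|jβ⟩ = (1/q)exp(-(2πi/q)[kα + 2jβ - kβ - jα]) is unitary and dual-unitary (U_C^{R1} is unitary) for every integer q ≥ 2. -/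
open Matrix

/-- The coupled quantum cat map:
`⟨kα|U_C|jβ⟩ = (1/q) exp(-(2πi/q)[kα + 2jβ - kβ - jα])`. -/
noncomputable def catMap (q : ℕ) : MQ q := fun p r =>
  (q : ℂ)⁻¹ * Complex.exp (-(2 * Real.pi * Complex.I / q) *
    (((p.1.val * p.2.val : ℤ) + 2 * (r.1.val * r.2.val : ℤ)
      - (p.1.val * r.2.val : ℤ) - (p.2.val * r.1.val : ℤ) : ℤ) : ℂ))


open Matrix Complex

private lemma fin_eq_of_dvd (q : ℕ) (a b : Fin q) (h : (q : ℤ) ∣ ((a : ℤ) - (b : ℤ))) :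
    a = b := by
  have h2 : |((a : ℤ) - (b : ℤ))| < q := by
    have := a.isLt; have := b.isLt
    rw [abs_lt]; omega
  have := Int.eq_zero_of_abs_lt_dvd h h2
  exact Fin.ext (by omega)

private lemma conj_exp_aux (q : ℕ) (n : ℤ) :
    (starRingEnd ℂ) (Complex.exp (-(2 * Real.pi * Complex.I / q) * (n : ℂ))) =
      Complex.exp ((2 * Real.pi * Complex.I / q) * (n : ℂ)) := by
  rw [← Complex.exp_conj]
  congr 1
  simp only [map_neg, _root_.map_mul, map_div₀, Complex.conj_I, Complex.conj_ofReal,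
    map_natCast, map_intCast, map_ofNat]
  ring

private lemma sum_exp_aux (q : ℕ) (hq : 0 < q) (a : ℤ) :
    (∑ m : Fin q, Complex.exp (-(2 * Real.pi * Complex.I / q) * ((a * (m : ℕ) : ℤ) : ℂ))) =
      if (q : ℤ) ∣ a then (q : ℂ) else 0 := by
  have hq0 : (q : ℂ) ≠ 0 := Nat.cast_ne_zero.mpr hq.ne'
  by_cases h : (q : ℤ) ∣ a
  · rw [if_pos h]
    obtain ⟨t, rfl⟩ := h
    have h1 : ∀ m : Fin q,
        Complex.exp (-(2 * Real.pi * Complex.I / q) * (((q : ℤ) * t * (m : ℕ) : ℤ) : ℂ)) = 1 := by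
      intro m
      have harg : -(2 * Real.pi * Complex.I / q) * (((q : ℤ) * t * (m : ℕ) : ℤ) : ℂ)
          = ((-(t * (m : ℕ)) : ℤ) : ℂ) * (2 * Real.pi * Complex.I) := by
        push_cast; field_simp
      rw [harg, Complex.exp_int_mul_two_pi_mul_I]
    rw [Finset.sum_congr rfl fun m _ => h1 m]
    simp
  · rw [if_neg h]
    set ζ := Complex.exp (-(2 * Real.pi * Complex.I / q) * (a : ℂ)) with hζ
    have hterm : ∀ m : Fin q,
        Complex.exp (-(2 * Real.pi * Complex.I / q) * ((a * (m : ℕ) : ℤ) : ℂ)) = ζ ^ (m : ℕ) := by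
      intro m
      rw [hζ, ← Complex.exp_nat_mul]
      congr 1; push_cast; ring
    have hζq : ζ ^ q = 1 := by
      rw [hζ, ← Complex.exp_nat_mul]
      have harg : (q : ℂ) * (-(2 * Real.pi * Complex.I / q) * (a : ℂ))
          = ((-a : ℤ) : ℂ) * (2 * Real.pi * Complex.I) := by
        push_cast; field_simp
      rw [harg, Complex.exp_int_mul_two_pi_mul_I]
    have hζ1 : ζ ≠ 1 := by
      intro hone
      rw [hζ, Complex.exp_eq_one_iff] at hone
      obtain ⟨n, hn⟩ := hone
      apply h
      have hπ : (2 * (Real.pi : ℂ) * Complex.I) ≠ 0 := by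
        simp [Real.pi_ne_zero, Complex.I_ne_zero]
      have h2 : (2 * (Real.pi : ℂ) * Complex.I) * (-(a : ℂ) / q)
          = (2 * (Real.pi : ℂ) * Complex.I) * n := by
        linear_combination hn
      have h3 := mul_left_cancel₀ hπ h2
      have h4 : (a : ℂ) = ((q : ℤ) * (-n) : ℤ) := by
        field_simp at h3
        push_cast
        linear_combination -h3
      exact ⟨-n, by exact_mod_cast h4⟩
    calc (∑ m : Fin q, Complex.exp (-(2 * Real.pi * Complex.I / q) * ((a * (m : ℕ) : ℤ) : ℂ)))
        = ∑ m : Fin q, ζ ^ (m : ℕ) := by exact Finset.sum_congr rfl fun m _ => hterm m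
      _ = ∑ i ∈ Finset.range q, ζ ^ i := Fin.sum_univ_eq_sum_range (fun i => ζ ^ i) q
      _ = (ζ ^ q - 1) / (ζ - 1) := geom_sum_eq hζ1 q
      _ = 0 := by rw [hζq]; simp

private lemma sum_exp2_aux (q : ℕ) (hq : 0 < q) (c a b : ℤ) :
    (∑ r : Fin q × Fin q, Complex.exp (-(2 * Real.pi * Complex.I / q) *
        ((c + a * (r.1 : ℕ) + b * (r.2 : ℕ) : ℤ) : ℂ))) =
      if (q : ℤ) ∣ a ∧ (q : ℤ) ∣ b then
        (q : ℂ) ^ 2 * Complex.exp (-(2 * Real.pi * Complex.I / q) * (c : ℂ))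
      else 0 := by
  rw [Fintype.sum_prod_type]
  have key : (∑ x : Fin q, ∑ y : Fin q, Complex.exp (-(2 * Real.pi * Complex.I / q) *
        ((c + a * (x : ℕ) + b * (y : ℕ) : ℤ) : ℂ)))
      = Complex.exp (-(2 * Real.pi * Complex.I / q) * (c : ℂ)) *
        ((∑ x : Fin q, Complex.exp (-(2 * Real.pi * Complex.I / q) * ((a * (x : ℕ) : ℤ) : ℂ))) *
         (∑ y : Fin q, Complex.exp (-(2 * Real.pi * Complex.I / q) * ((b * (y : ℕ) : ℤ) : ℂ)))) := by
    rw [Finset.sum_mul_sum, Finset.mul_sum]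
    refine Finset.sum_congr rfl fun x _ => ?_
    rw [Finset.mul_sum]
    refine Finset.sum_congr rfl fun y _ => ?_
    rw [← Complex.exp_add, ← Complex.exp_add]
    congr 1; push_cast; ring
  rw [key, sum_exp_aux q hq a, sum_exp_aux q hq b]
  by_cases ha : (q : ℤ) ∣ a <;> by_cases hb : (q : ℤ) ∣ b <;>
    simp [ha, hb] <;> ring

private lemma prod_step (q : ℕ) (e1 e2 : ℤ) :
    ((q : ℂ)⁻¹ * Complex.exp (-(2 * Real.pi * Complex.I / q) * (e1 : ℂ))) *
      star ((q : ℂ)⁻¹ * Complex.exp (-(2 * Real.pi * Complex.I / q) * (e2 : ℂ))) =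
    (q : ℂ)⁻¹ * (q : ℂ)⁻¹ *
      Complex.exp (-(2 * Real.pi * Complex.I / q) * ((e1 - e2 : ℤ) : ℂ)) := by
  rw [Complex.star_def, _root_.map_mul, conj_exp_aux, map_inv₀, map_natCast]
  rw [mul_mul_mul_comm, ← Complex.exp_add]
  congr 2
  push_cast; ring

/-- the coupled quantum cat map is unitary and dual-unitary
(`U_C^{R1}` is unitary) for every `q ≥ 2`. -/
theorem catMap_unitary_and_dual (q : ℕ) (hq : 2 ≤ q) :
    catMap q ∈ Matrix.unitaryGroup (Fin q × Fin q) ℂ ∧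
    R1 (catMap q) ∈ Matrix.unitaryGroup (Fin q × Fin q) ℂ := by
  have hq0 : (q : ℂ) ≠ 0 := Nat.cast_ne_zero.mpr (by omega)
  constructor
  · rw [Matrix.mem_unitaryGroup_iff]
    ext p p'
    obtain ⟨k, α⟩ := p
    obtain ⟨k', α'⟩ := p'
    rw [Matrix.mul_apply, Matrix.one_apply]
    have step : ∀ r : Fin q × Fin q,
        catMap q (k, α) r * (star (catMap q)) r (k', α')
          = (q : ℂ)⁻¹ * (q : ℂ)⁻¹ * Complex.exp (-(2 * Real.pi * Complex.I / q) *
              (((((k : ℕ) : ℤ) * ((α : ℕ) : ℤ) - ((k' : ℕ) : ℤ) * ((α' : ℕ) : ℤ))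
                + (((α' : ℕ) : ℤ) - ((α : ℕ) : ℤ)) * ((r.1 : ℕ) : ℤ)
                + (((k' : ℕ) : ℤ) - ((k : ℕ) : ℤ)) * ((r.2 : ℕ) : ℤ) : ℤ) : ℂ)) := by
      intro r
      rw [Matrix.star_apply]
      simp only [catMap]
      rw [prod_step]
      congr 2
      push_cast; ring
    rw [Finset.sum_congr rfl fun r _ => step r, ← Finset.mul_sum,
      sum_exp2_aux q (by omega)]
    by_cases h : ((k, α) : Fin q × Fin q) = (k', α')
    · rw [if_pos h]
      rw [Prod.mk.injEq] at h
      obtain ⟨rfl, rfl⟩ := h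
      rw [if_pos ⟨⟨0, by ring⟩, ⟨0, by ring⟩⟩]
      have hc : (((((k : ℕ) : ℤ) * ((α : ℕ) : ℤ) - ((k : ℕ) : ℤ) * ((α : ℕ) : ℤ)) : ℤ) : ℂ) = 0 := by
        push_cast; ring
      rw [hc, mul_zero, Complex.exp_zero, mul_one]
      field_simp
    · rw [if_neg h, if_neg, mul_zero]
      rintro ⟨hd1, hd2⟩
      obtain rfl := fin_eq_of_dvd q α' α hd1
      obtain rfl := fin_eq_of_dvd q k' k hd2
      exact h rfl
  · rw [Matrix.mem_unitaryGroup_iff]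
    ext p p'
    obtain ⟨β, α⟩ := p
    obtain ⟨β', α'⟩ := p'
    rw [Matrix.mul_apply, Matrix.one_apply]
    have step : ∀ r : Fin q × Fin q,
        R1 (catMap q) (β, α) r * (star (R1 (catMap q))) r (β', α')
          = (q : ℂ)⁻¹ * (q : ℂ)⁻¹ * Complex.exp (-(2 * Real.pi * Complex.I / q) *
              ((((0 : ℤ))
                + (2 * ((β : ℕ) : ℤ) - ((α : ℕ) : ℤ) - 2 * ((β' : ℕ) : ℤ) + ((α' : ℕ) : ℤ)) * ((r.1 : ℕ) : ℤ)
                + (((α : ℕ) : ℤ) - ((β : ℕ) : ℤ) - ((α' : ℕ) : ℤ) + ((β' : ℕ) : ℤ)) * ((r.2 : ℕ) : ℤ) : ℤ) : ℂ)) := by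
      intro r
      rw [Matrix.star_apply]
      simp only [R1, catMap]
      rw [prod_step]
      congr 2
      push_cast; ring
    rw [Finset.sum_congr rfl fun r _ => step r, ← Finset.mul_sum,
      sum_exp2_aux q (by omega)]
    by_cases h : ((β, α) : Fin q × Fin q) = (β', α')
    · rw [if_pos h]
      rw [Prod.mk.injEq] at h
      obtain ⟨rfl, rfl⟩ := h
      rw [if_pos ⟨⟨0, by ring⟩, ⟨0, by ring⟩⟩]
      rw [Int.cast_zero, mul_zero, Complex.exp_zero, mul_one]
      field_simp
    · rw [if_neg h, if_neg, mul_zero]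
      rintro ⟨hd1, hd2⟩
      have hsum : (q : ℤ) ∣ (((β : ℕ) : ℤ) - ((β' : ℕ) : ℤ)) := by
        have hadd := dvd_add hd1 hd2
        have heq : (2 * ((β : ℕ) : ℤ) - ((α : ℕ) : ℤ) - 2 * ((β' : ℕ) : ℤ) + ((α' : ℕ) : ℤ))
            + (((α : ℕ) : ℤ) - ((β : ℕ) : ℤ) - ((α' : ℕ) : ℤ) + ((β' : ℕ) : ℤ))
            = ((β : ℕ) : ℤ) - ((β' : ℕ) : ℤ) := by ring
        rwa [heq] at hadd
      obtain rfl := fin_eq_of_dvd q β β' hsum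
      have hα : (q : ℤ) ∣ (((α : ℕ) : ℤ) - ((α' : ℕ) : ℤ)) := by
        have heq : (((α : ℕ) : ℤ) - ((β : ℕ) : ℤ) - ((α' : ℕ) : ℤ) + ((β : ℕ) : ℤ))
            = ((α : ℕ) : ℤ) - ((α' : ℕ) : ℤ) := by ring
        rwa [heq] at hd2
      obtain rfl := fin_eq_of_dvd q α α' hα
      exact h rfl
end

section
/- For the coupled quantum cat map U_C with ⟨kα|U_C|jβ⟩ = (1/q)exp(-(2πi/q)[kα + 2jβ - kβ - jα]), one has ⟨kα|U_C^{T1}U_C^{T1†}|jβ⟩ = e^{(2πi/q)(kα-jβ)} δ_{α,β} δ_{2(j-k) mod q, 0}. Consequently, U_C^{T1} is unitary (so U_C is 2-unitary) if and only if q is odd. -/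
open Matrix

/-- Character sum: `∑_{m<q} e^{(2πi/q) t m}` is `q` if `q ∣ t`, else `0`. -/
lemma sum_exp_char (q : ℕ) (hq : 0 < q) (t : ℤ) :
    ∑ m : Fin q, Complex.exp ((2 * Real.pi * Complex.I / q) * t * m) =
      if (q : ℤ) ∣ t then (q : ℂ) else 0 := by
  have hq0 : (q : ℂ) ≠ 0 := Nat.cast_ne_zero.mpr hq.ne'
  set ζ : ℂ := Complex.exp ((2 * Real.pi * Complex.I / q) * t) with hζ
  have hterm : ∀ m : Fin q, Complex.exp ((2 * Real.pi * Complex.I / q) * t * m) = ζ ^ (m : ℕ) := by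
    intro m
    rw [hζ, ← Complex.exp_nat_mul]
    ring_nf
  simp only [hterm]
  rw [Fin.sum_univ_eq_sum_range (fun i => ζ ^ i)]
  by_cases hd : (q : ℤ) ∣ t
  · obtain ⟨n, hn⟩ := id hd
    have hζ1 : ζ = 1 := by
      rw [hζ, hn]
      rw [show (2 * Real.pi * Complex.I / q) * ((q * n : ℤ) : ℂ) = (n : ℤ) * (2 * Real.pi * Complex.I) by
        push_cast; field_simp]
      exact Complex.exp_int_mul_two_pi_mul_I n
    simp [hζ1, hd]
  · have hζq : ζ ^ q = 1 := by
      rw [hζ, ← Complex.exp_nat_mul]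
      rw [show (q : ℂ) * ((2 * Real.pi * Complex.I / q) * t) = (t : ℂ) * (2 * Real.pi * Complex.I) by
        field_simp]
      exact Complex.exp_int_mul_two_pi_mul_I t
    have hζ1 : ζ ≠ 1 := by
      intro h
      rw [hζ, Complex.exp_eq_one_iff] at h
      obtain ⟨n, hn⟩ := h
      apply hd
      refine ⟨n, ?_⟩
      have h2 : (2 * (Real.pi : ℂ) * Complex.I) ≠ 0 := by
        simp [Real.pi_ne_zero, Complex.I_ne_zero]
      have : (t : ℂ) = (q : ℂ) * n := by
        field_simp at hn
        exact mul_left_cancel₀ h2 (by rw [hn])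
      exact_mod_cast this
    rw [geom_sum_eq hζ1, hζq]
    simp [hd]

lemma star_exp_neg (q : ℕ) (n : ℤ) :
    star (Complex.exp (-(2 * Real.pi * Complex.I / q) * n)) =
      Complex.exp ((2 * Real.pi * Complex.I / q) * n) := by
  simp only [RCLike.star_def, ← Complex.exp_conj]
  congr 1
  simp only [map_neg, _root_.map_mul, map_div₀, Complex.conj_I, Complex.conj_ofReal,
    map_ofNat, Complex.conj_natCast, map_intCast]
  ring

lemma term_eq (q : ℕ) (p r x : Fin q × Fin q) :
    T1 (catMap q) p x * star (T1 (catMap q) r x) =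
      ((q:ℂ)⁻¹ * Complex.exp ((2 * Real.pi * Complex.I / q) *
          ((r.2.val - p.2.val : ℤ)) * x.1)) *
      ((q:ℂ)⁻¹ * Complex.exp ((2 * Real.pi * Complex.I / q) *
          ((2 * (r.1.val - p.1.val) : ℤ)) * x.2)) *
      Complex.exp ((2 * Real.pi * Complex.I / q) *
          (((p.1.val * p.2.val : ℤ) - (r.1.val * r.2.val : ℤ) : ℤ) : ℂ)) := by
  simp only [T1, catMap, star_mul', star_exp_neg, RCLike.star_def, map_inv₀, Complex.conj_natCast]
  rw [mul_mul_mul_comm, ← Complex.exp_add,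
    mul_mul_mul_comm ((q:ℂ)⁻¹) _ ((q:ℂ)⁻¹), mul_assoc _ _ (Complex.exp _),
    ← Complex.exp_add, mul_assoc ((q:ℂ)⁻¹ * (q:ℂ)⁻¹), ← Complex.exp_add, ← mul_assoc]
  congr 1
  push_cast
  ring

lemma fin_dvd_iff (q : ℕ) (a b : Fin q) :
    (q : ℤ) ∣ ((a.val : ℤ) - (b.val : ℤ)) ↔ a = b := by
  constructor
  · intro h
    have ha : (a.val : ℤ) < q := by exact_mod_cast a.isLt
    have hb : (b.val : ℤ) < q := by exact_mod_cast b.isLt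
    have h0 : ((a.val : ℤ) - (b.val : ℤ)) = 0 := by
      refine Int.eq_zero_of_abs_lt_dvd h ?_
      rw [abs_lt]
      omega
    have : a.val = b.val := by omega
    exact Fin.ext this
  · intro h; rw [h]; simp

lemma scaled_sum (q : ℕ) (hq : 0 < q) (t : ℤ) :
    ∑ m : Fin q, (q:ℂ)⁻¹ * Complex.exp ((2 * Real.pi * Complex.I / q) * t * m) =
      if (q : ℤ) ∣ t then 1 else 0 := by
  have hq0 : (q : ℂ) ≠ 0 := Nat.cast_ne_zero.mpr hq.ne'
  rw [← Finset.mul_sum, sum_exp_char q hq]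
  split_ifs
  · field_simp
  · simp

/-- The entries of `U_C^{T1} U_C^{T1†}`. -/
lemma catMap_entry (q : ℕ) (hq : 0 < q) (p r : Fin q × Fin q) :
    (T1 (catMap q) * (T1 (catMap q))ᴴ) p r =
      Complex.exp ((2 * Real.pi * Complex.I / q) *
          (((p.1.val * p.2.val : ℤ) - (r.1.val * r.2.val : ℤ) : ℤ) : ℂ)) *
        (if p.2 = r.2 then 1 else 0) *
        (if (q : ℤ) ∣ 2 * ((r.1.val : ℤ) - (p.1.val : ℤ)) then 1 else 0) := by
  rw [Matrix.mul_apply]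
  simp only [conjTranspose_apply, ← RCLike.star_def]
  rw [Finset.sum_congr rfl (fun x _ => term_eq q p r x)]
  rw [Fintype.sum_prod_type]
  simp only [← Finset.sum_mul]
  rw [← Finset.sum_mul_sum]
  rw [scaled_sum q hq, scaled_sum q hq]
  simp only [fin_dvd_iff q r.2 p.2]
  have h : (if r.2 = p.2 then (1:ℂ) else 0) = (if p.2 = r.2 then 1 else 0) := by
    simp [eq_comm]
  rw [h]
  ring

/-- the entries of `U_C^{T1} U_C^{T1†}` are
`⟨kα|U_C^{T1}U_C^{T1†}|jβ⟩ = e^{(2πi/q)(kα-jβ)} δ_{α,β} δ_{2(j-k) mod q, 0}`;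
consequently `U_C^{T1}` is unitary (so `U_C` is 2-unitary) iff `q` is odd. -/
theorem catMap_T1_entries_and_two_unitary_iff_odd (q : ℕ) (hq : 0 < q) :
    (∀ p r : Fin q × Fin q,
      (T1 (catMap q) * (T1 (catMap q))ᴴ) p r =
        Complex.exp ((2 * Real.pi * Complex.I / q) *
            (((p.1.val * p.2.val : ℤ) - (r.1.val * r.2.val : ℤ) : ℤ) : ℂ)) *
          (if p.2 = r.2 then 1 else 0) *
          (if (2 * ((r.1.val : ℤ) - (p.1.val : ℤ))) % (q : ℤ) = 0 then 1 else 0)) ∧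
    (T1 (catMap q) ∈ Matrix.unitaryGroup (Fin q × Fin q) ℂ ↔ Odd q) := by
  have hmod : ∀ t : ℤ, (t % (q : ℤ) = 0) = ((q : ℤ) ∣ t) := by
    intro t
    exact propext ⟨Int.dvd_of_emod_eq_zero, Int.emod_eq_zero_of_dvd⟩
  have hentries : ∀ p r : Fin q × Fin q,
      (T1 (catMap q) * (T1 (catMap q))ᴴ) p r =
        Complex.exp ((2 * Real.pi * Complex.I / q) *
            (((p.1.val * p.2.val : ℤ) - (r.1.val * r.2.val : ℤ) : ℤ) : ℂ)) *
          (if p.2 = r.2 then 1 else 0) *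
          (if (2 * ((r.1.val : ℤ) - (p.1.val : ℤ))) % (q : ℤ) = 0 then 1 else 0) := by
    intro p r
    rw [catMap_entry q hq p r]
    simp only [hmod]
  refine ⟨hentries, ?_⟩
  rw [Matrix.mem_unitaryGroup_iff, Matrix.star_eq_conjTranspose]
  constructor
  · intro h1
    by_contra hodd
    have heven : Even q := Nat.not_odd_iff_even.mp hodd
    obtain ⟨s, hs⟩ := heven
    have hs1 : 0 < s := by omega
    have hslt : s < q := by omega
    set p : Fin q × Fin q := (⟨0, hq⟩, ⟨0, hq⟩)
    set r : Fin q × Fin q := (⟨s, hslt⟩, ⟨0, hq⟩)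
    have hpr : p ≠ r := by
      intro h
      have : (0 : ℕ) = s := congrArg (fun x => x.1.val) h
      omega
    have hzero : (T1 (catMap q) * (T1 (catMap q))ᴴ) p r = 0 := by
      rw [h1, Matrix.one_apply_ne hpr]
    rw [hentries p r] at hzero
    simp only [p, r] at hzero
    norm_num at hzero
    exact hzero ⟨1, by omega⟩
  · intro hodd
    ext p r
    rw [hentries p r]
    simp only [hmod]
    by_cases h2 : p.2 = r.2
    · by_cases hd : (q : ℤ) ∣ 2 * ((r.1.val : ℤ) - (p.1.val : ℤ))
      · have hcop : IsCoprime (q : ℤ) 2 := by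
          rw [Int.isCoprime_iff_gcd_eq_one]
          simpa [Int.gcd] using Nat.coprime_two_right.mpr hodd
        have hd1 : (q : ℤ) ∣ ((r.1.val : ℤ) - (p.1.val : ℤ)) :=
          hcop.dvd_of_dvd_mul_left hd
        have h1 : r.1 = p.1 := (fin_dvd_iff q r.1 p.1).mp hd1
        have hpr : p = r := Prod.ext h1.symm h2
        subst hpr
        simp [Matrix.one_apply]
      · have hpr : p ≠ r := by
          intro h; apply hd; rw [h]; simp
        rw [if_pos h2, if_neg hd, Matrix.one_apply_ne hpr]
        ring
    · have hpr : p ≠ r := fun h => h2 (by rw [h])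
      rw [if_neg h2, Matrix.one_apply_ne hpr]
      ring
end

section
/- For q even, the channel of the quantum cat map satisfies M₊[U_C] = |Φ⁺⟩⟨Φ⁺| + |Ψ⟩⟨Ψ̄|, where |Ψ⟩ = (1/√q)Σ_k |k, (k+q/2) mod q⟩ and |Ψ̄⟩ = (1/√q)Σ_k (-1)^k |kk⟩; since ⟨Ψ̄|Φ⁺⟩ = ⟨Ψ̄|Ψ⟩ = ⟨Φ⁺|Ψ⟩ = 0, it follows that M₊[U_C]ⁿ = |Φ⁺⟩⟨Φ⁺| for all n ≥ 2. -/
open Matrix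

/-- `|Ψ⟩ = (1/√q) Σ_k |k, (k+q/2) mod q⟩`. -/
noncomputable def Psi (q : ℕ) : Fin q × Fin q → ℂ :=
  fun p => if (p.2 : ℕ) = ((p.1 : ℕ) + q / 2) % q then ((Real.sqrt q : ℝ) : ℂ)⁻¹ else 0

/-- `|Ψ̄⟩ = (1/√q) Σ_k (-1)^k |kk⟩`. -/
noncomputable def PsiBar (q : ℕ) : Fin q × Fin q → ℂ :=
  fun p => if p.1 = p.2 then (-1 : ℂ) ^ (p.1 : ℕ) * ((Real.sqrt q : ℝ) : ℂ)⁻¹ else 0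


open Complex Finset

lemma sum_exp_eq (q : ℕ) (hq : 0 < q) (n : ℤ) :
    ∑ m : Fin q, Complex.exp (-(2 * Real.pi * Complex.I / q) * ((m : ℕ) * n : ℤ)) =
      if (q : ℤ) ∣ n then (q : ℂ) else 0 := by
  have hqC : (q : ℂ) ≠ 0 := Nat.cast_ne_zero.mpr hq.ne'
  set x : ℂ := Complex.exp (-(2 * Real.pi * Complex.I / q) * n) with hx
  have hterm : ∀ m : ℕ,
      Complex.exp (-(2 * Real.pi * Complex.I / q) * ((m * n : ℤ) : ℂ)) = x ^ m := by
    intro m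
    rw [hx, ← Complex.exp_nat_mul]
    congr 1
    push_cast
    ring
  have hsum : ∑ m : Fin q, Complex.exp (-(2 * Real.pi * Complex.I / q) * ((m : ℕ) * n : ℤ)) =
      ∑ m ∈ Finset.range q, x ^ m := by
    rw [← Fin.sum_univ_eq_sum_range (fun m => x ^ m) q]
    exact Finset.sum_congr rfl fun m _ => hterm m
  rw [hsum]
  by_cases hdvd : (q : ℤ) ∣ n
  · obtain ⟨t, ht⟩ := hdvd
    have hx1 : x = 1 := by
      rw [hx, ht]
      have : -(2 * Real.pi * Complex.I / q) * ((q * t : ℤ) : ℂ) =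
          (-t : ℤ) * (2 * Real.pi * Complex.I) := by
        push_cast
        field_simp
      rw [this, Complex.exp_int_mul_two_pi_mul_I]
    rw [if_pos ⟨t, ht⟩]
    simp [hx1]
  · have hxq : x ^ q = 1 := by
      rw [hx, ← Complex.exp_nat_mul]
      have : (q : ℂ) * (-(2 * Real.pi * Complex.I / q) * n) =
          (-n : ℤ) * (2 * Real.pi * Complex.I) := by
        push_cast
        field_simp
      rw [this, Complex.exp_int_mul_two_pi_mul_I]
    have hx1 : x ≠ 1 := by
      intro h
      obtain ⟨k, hk⟩ := Complex.exp_eq_one_iff.mp (hx ▸ h)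
      apply hdvd
      refine ⟨-k, ?_⟩
      have hπ : (Real.pi : ℂ) ≠ 0 := by exact_mod_cast Real.pi_ne_zero
      have hI := Complex.I_ne_zero
      have h2πI : (2 * (Real.pi : ℂ) * Complex.I : ℂ) ≠ 0 := by
        simp [hπ, Complex.I_ne_zero]
      have hc : (2 * (Real.pi : ℂ) * Complex.I) * (-n : ℂ) =
          (2 * (Real.pi : ℂ) * Complex.I) * ((k * q : ℤ) : ℂ) := by
        field_simp at hk
        push_cast
        linear_combination (2 * (Real.pi : ℂ) * Complex.I) * hk
      have h3 := mul_left_cancel₀ h2πI hc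
      have h2 : (n : ℂ) = ((q * -k : ℤ) : ℂ) := by push_cast at h3 ⊢; linear_combination -h3
      exact_mod_cast h2
    rw [geom_sum_eq hx1, hxq]
    simp [hdvd]

lemma conj_exp_entry (q : ℕ) (t : ℤ) :
    star ((q : ℂ)⁻¹ * Complex.exp (-(2 * Real.pi * Complex.I / q) * (t : ℂ))) =
      (q : ℂ)⁻¹ * Complex.exp (-(2 * Real.pi * Complex.I / q) * ((-t : ℤ) : ℂ)) := by
  have h1 : (starRingEnd ℂ) (-(2 * Real.pi * Complex.I / q) * (t : ℂ)) =
      -(2 * Real.pi * Complex.I / q) * ((-t : ℤ) : ℂ) := by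
    push_cast [_root_.map_mul, map_neg, map_div₀, Complex.conj_I, map_ofNat, map_intCast,
      map_natCast, map_inv₀, Complex.conj_ofReal]
    ring
  rw [star_mul', Complex.star_def, ← Complex.exp_conj, h1,
    show (starRingEnd ℂ) ((q : ℂ)⁻¹) = (q : ℂ)⁻¹ by simp]

lemma prodEntry (q : ℕ) (hq : 0 < q) (i b j' b' : Fin q) :
    (T2 (catMap q) * (T2 (catMap q))ᴴ) (i, b) (j', b') =
      (q : ℂ)⁻¹ * (q : ℂ)⁻¹ *
        Complex.exp (-(2 * Real.pi * Complex.I / q) *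
          (((j' : ℤ) * (b' : ℤ) - (i : ℤ) * (b : ℤ) : ℤ) : ℂ)) *
        ((if (q : ℤ) ∣ ((i : ℤ) - (j' : ℤ)) then (q : ℂ) else 0) *
          (if (q : ℤ) ∣ 2 * ((b : ℤ) - (b' : ℤ)) then (q : ℂ) else 0)) := by
  rw [Matrix.mul_apply, Fintype.sum_prod_type]
  have hterm : ∀ m a : Fin q,
      T2 (catMap q) (i, b) (m, a) * (T2 (catMap q))ᴴ (m, a) (j', b') =
        ((q : ℂ)⁻¹ * (q : ℂ)⁻¹ *
          Complex.exp (-(2 * Real.pi * Complex.I / q) *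
            (((j' : ℤ) * (b' : ℤ) - (i : ℤ) * (b : ℤ) : ℤ) : ℂ))) *
        (Complex.exp (-(2 * Real.pi * Complex.I / q) *
            (((m : ℕ) * (2 * ((b : ℤ) - (b' : ℤ))) : ℤ) : ℂ)) *
          Complex.exp (-(2 * Real.pi * Complex.I / q) *
            (((a : ℕ) * ((i : ℤ) - (j' : ℤ)) : ℤ) : ℂ))) := by
    intro m a
    rw [Matrix.conjTranspose_apply]
    show (catMap q) (i, a) (m, b) * star ((catMap q) (j', a) (m, b')) = _
    rw [catMap, catMap]
    dsimp only
    rw [conj_exp_entry]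
    rw [mul_mul_mul_comm]
    conv_lhs => rw [← Complex.exp_add]
    conv_rhs => rw [← Complex.exp_add, mul_assoc, ← Complex.exp_add]
    congr 2
    push_cast
    ring
  simp only [hterm]
  simp only [← Finset.mul_sum, ← Finset.sum_mul]
  rw [sum_exp_eq q hq, sum_exp_eq q hq]
  ring

lemma mod_add_half (q h k : ℕ) (hq : q = 2 * h) (hh : 0 < h) (hk : k < q) :
    (k + h) % q = if k + h < q then k + h else k + h - q := by
  split
  · exact Nat.mod_eq_of_lt ‹_›
  · rw [Nat.mod_eq_sub_mod (by omega)]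
    exact Nat.mod_eq_of_lt (by omega)

lemma mod_add_half_ne (q h k : ℕ) (hq : q = 2 * h) (hh : 0 < h) (hk : k < q) :
    (k + h) % q ≠ k := by
  rw [mod_add_half q h k hq hh hk]
  split <;> omega

lemma dvd1_iff (q : ℕ) (a k : Fin q) :
    (q : ℤ) ∣ ((a : ℤ) - (k : ℤ)) ↔ a = k := by
  constructor
  · intro hd
    have h1 := a.isLt
    have h2 := k.isLt
    have h0 : 0 < q := by omega
    have := Int.eq_zero_of_abs_lt_dvd hd (by
      rw [abs_lt]
      constructor <;> [skip; skip] <;> push_cast <;> omega)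
    exact Fin.ext (by omega)
  · rintro rfl
    exact ⟨0, by ring⟩

lemma dvd2_iff (q h : ℕ) (hq : q = 2 * h) (hh : 0 < h) (a k : Fin q) :
    (q : ℤ) ∣ 2 * ((a : ℤ) - (k : ℤ)) ↔ (a = k ∨ (a : ℕ) = ((k : ℕ) + h) % q) := by
  have ha := a.isLt
  have hk := k.isLt
  rw [mod_add_half q h (k : ℕ) hq hh hk]
  constructor
  · rintro ⟨t, ht⟩
    have hb1 : ((a : ℕ) : ℤ) < (q : ℤ) := by exact_mod_cast ha
    have hb2 : ((k : ℕ) : ℤ) < (q : ℤ) := by exact_mod_cast hk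
    have hb3 : (0 : ℤ) ≤ ((a : ℕ) : ℤ) := Int.natCast_nonneg _
    have hb4 : (0 : ℤ) ≤ ((k : ℕ) : ℤ) := Int.natCast_nonneg _
    have hq0 : (0 : ℤ) < (q : ℤ) := by exact_mod_cast (by omega : 0 < q)
    have htb : -2 < t ∧ t < 2 := by
      constructor <;> nlinarith
    obtain ⟨htl, htu⟩ := htb
    interval_cases t
    · right; split <;> omega
    · left; exact Fin.ext (by omega)
    · right; split <;> omega
  · rintro (rfl | hval)
    · exact ⟨0, by ring⟩
    · refine ⟨if (k : ℕ) + h < q then 1 else -1, ?_⟩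
      by_cases hc : (k : ℕ) + h < q <;> simp only [hc, if_true, if_false, if_pos, if_neg,
        not_true, not_false_iff] at hval ⊢ <;> omega

lemma phase_lemma (q h : ℕ) (hq : q = 2 * h) (hh : 0 < h) (j a k : Fin q)
    (hav : (a : ℕ) = ((k : ℕ) + h) % q) :
    Complex.exp (-(2 * Real.pi * Complex.I / q) *
      (((j : ℤ) * (k : ℤ) - (j : ℤ) * (a : ℤ) : ℤ) : ℂ)) = (-1 : ℂ) ^ (j : ℕ) := by
  have hk := k.isLt
  rw [mod_add_half q h (k : ℕ) hq hh hk] at hav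
  set t : ℤ := if (k : ℕ) + h < q then 0 else 1 with hts
  have hat : (a : ℤ) = (k : ℤ) + h - q * t := by
    rw [hts]
    by_cases hc : (k : ℕ) + h < q <;> simp only [hc, if_true, if_false] at hav ⊢ <;>
      push_cast <;> omega
  have hqC : (q : ℂ) ≠ 0 := Nat.cast_ne_zero.mpr (by omega)
  have harg : -(2 * Real.pi * Complex.I / (q : ℂ)) *
      (((j : ℤ) * (k : ℤ) - (j : ℤ) * (a : ℤ) : ℤ) : ℂ) =
      ((-((j : ℤ) * t) : ℤ) : ℂ) * (2 * Real.pi * Complex.I) +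
        ((j : ℕ) : ℂ) * (Real.pi * Complex.I) := by
    have hZ : ((j : ℤ) * (k : ℤ) - (j : ℤ) * (a : ℤ)) = (j : ℤ) * ((q : ℤ) * t - h) := by
      rw [hat]; ring
    rw [hZ]
    have hqh : (q : ℂ) = 2 * h := by exact_mod_cast congrArg (Nat.cast : ℕ → ℂ) hq
    push_cast
    rw [hqh]
    have hhC : (h : ℂ) ≠ 0 := Nat.cast_ne_zero.mpr hh.ne'
    field_simp
    ring
  rw [harg, Complex.exp_add, Complex.exp_int_mul_two_pi_mul_I, one_mul,
    Complex.exp_nat_mul, Complex.exp_pi_mul_I]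

lemma sqrt_inv_sq (q : ℕ) (hq : 0 < q) :
    ((Real.sqrt q : ℝ) : ℂ)⁻¹ * ((Real.sqrt q : ℝ) : ℂ)⁻¹ = (q : ℂ)⁻¹ := by
  rw [← mul_inv, ← Complex.ofReal_mul, Real.mul_self_sqrt (Nat.cast_nonneg q)]
  norm_num

lemma part1 (q : ℕ) (hq : 2 ≤ q) (heven : Even q) :
    Mplus (catMap q) =
      vecMulVec (PhiPlus q) (star (PhiPlus q)) + vecMulVec (Psi q) (star (PsiBar q)) := by
  obtain ⟨h, hqh⟩ := heven
  have hq2 : q = 2 * h := by omega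
  have hh : 0 < h := by omega
  have hq0 : 0 < q := by omega
  have hhalf : q / 2 = h := by omega
  have hqC : (q : ℂ) ≠ 0 := Nat.cast_ne_zero.mpr (by omega)
  ext ⟨k, α⟩ ⟨j, β⟩
  rw [Matrix.add_apply, Matrix.vecMulVec_apply, Matrix.vecMulVec_apply, Mplus,
    Matrix.smul_apply, smul_eq_mul]
  rw [show R1 (T2 (catMap q) * (T2 (catMap q))ᴴ) (k, α) (j, β)
      = (T2 (catMap q) * (T2 (catMap q))ᴴ) (β, α) (j, k) from rfl]
  rw [prodEntry q hq0 β α j k]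
  simp only [PhiPlus, Psi, PsiBar, Pi.star_apply, hhalf]
  have hmul : (q : ℂ) * (q : ℂ)⁻¹ = 1 := mul_inv_cancel₀ hqC
  have hs := sqrt_inv_sq q hq0
  by_cases hjβ : j = β
  · rw [if_pos hjβ, if_pos hjβ,
      if_pos (show (q : ℤ) ∣ ((β : ℤ) - (j : ℤ)) from ⟨0, by rw [hjβ]; ring⟩)]
    by_cases h2 : (q : ℤ) ∣ 2 * ((α : ℤ) - (k : ℤ))
    · rw [if_pos h2]
      rcases (dvd2_iff q h hq2 hh α k).mp h2 with h3 | h3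
      · -- α = k
        have hne : ¬ (α : ℕ) = ((k : ℕ) + h) % q := fun hc =>
          (mod_add_half_ne q h (k : ℕ) hq2 hh k.isLt) (by rw [← hc, h3])
        rw [if_pos h3.symm, if_neg hne,
          show ((j : ℤ) * (k : ℤ) - (β : ℤ) * (α : ℤ) : ℤ) = 0 from by rw [hjβ, h3]; ring]
        simp only [Int.cast_zero, mul_zero, Complex.exp_zero, zero_mul, add_zero,
          Complex.star_def, map_inv₀, Complex.conj_ofReal]
        linear_combination (-1 : ℂ) * hs + ((q : ℂ)⁻¹ * ((q : ℂ) * (q : ℂ)⁻¹ + 1)) * hmul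
      · -- α = k + q/2
        have hne : ¬ k = α := by
          intro hc
          exact (mod_add_half_ne q h (k : ℕ) hq2 hh k.isLt) (by rw [← h3, hc])
        rw [if_neg hne, if_pos h3,
          show ((j : ℤ) * (k : ℤ) - (β : ℤ) * (α : ℤ) : ℤ)
            = ((j : ℤ) * (k : ℤ) - (j : ℤ) * (α : ℤ) : ℤ) from by rw [hjβ],
          phase_lemma q h hq2 hh j α k h3]
        simp only [zero_mul, zero_add, Complex.star_def, _root_.map_mul, map_pow, map_neg, _root_.map_one,
          map_inv₀, Complex.conj_ofReal]
        linear_combination (-((-1 : ℂ) ^ (j : ℕ))) * hs +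
          ((-1 : ℂ) ^ (j : ℕ) * (q : ℂ)⁻¹ * ((q : ℂ) * (q : ℂ)⁻¹ + 1)) * hmul
    · rw [if_neg h2]
      have hα1 : ¬ k = α := fun hc => h2 ((dvd2_iff q h hq2 hh α k).mpr (Or.inl hc.symm))
      have hα2 : ¬ (α : ℕ) = ((k : ℕ) + h) % q := fun hc =>
        h2 ((dvd2_iff q h hq2 hh α k).mpr (Or.inr hc))
      simp [hα1, hα2]
  · rw [if_neg (show ¬ (q : ℤ) ∣ ((β : ℤ) - (j : ℤ)) from fun hd =>
      hjβ ((dvd1_iff q β j).mp hd).symm)]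
    simp [hjβ]

lemma vmv_mul {n : Type*} [Fintype n] [DecidableEq n] (u v w x : n → ℂ) :
    vecMulVec u v * vecMulVec w x = (dotProduct v w) • vecMulVec u x := by
  ext p r
  rw [Matrix.mul_apply, Matrix.smul_apply, Matrix.vecMulVec_apply, smul_eq_mul, dotProduct,
    Finset.sum_mul]
  refine Finset.sum_congr rfl fun s _ => ?_
  rw [Matrix.vecMulVec_apply, Matrix.vecMulVec_apply]
  ring

lemma orth1 (q : ℕ) (hq : 2 ≤ q) (heven : Even q) :
    dotProduct (star (PsiBar q)) (PhiPlus q) = 0 := by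
  have hq0 : 0 < q := by omega
  have hs := sqrt_inv_sq q hq0
  rw [dotProduct, Fintype.sum_prod_type]
  have hterm : ∀ a b : Fin q, star (PsiBar q) (a, b) * PhiPlus q (a, b) =
      if a = b then (-1 : ℂ) ^ (a : ℕ) * (q : ℂ)⁻¹ else 0 := by
    intro a b
    simp only [PsiBar, PhiPlus, Pi.star_apply]
    by_cases hab : a = b
    · rw [if_pos hab, if_pos hab, if_pos hab]
      simp only [Complex.star_def, _root_.map_mul, map_pow, map_neg, _root_.map_one,
        map_inv₀, Complex.conj_ofReal]
      linear_combination ((-1 : ℂ) ^ (a : ℕ)) * hs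
    · simp [hab]
  simp only [hterm]
  simp only [Finset.sum_ite_eq, Finset.mem_univ, if_true]
  rw [← Finset.sum_mul, Fin.sum_univ_eq_sum_range (fun n => (-1 : ℂ) ^ n) q,
    neg_one_geom_sum, if_pos heven, zero_mul]

lemma orth2 (q : ℕ) (hq : 2 ≤ q) (heven : Even q) :
    dotProduct (star (PsiBar q)) (Psi q) = 0 := by
  obtain ⟨h, hqh⟩ := heven
  have hq2 : q = 2 * h := by omega
  have hh : 0 < h := by omega
  have hhalf : q / 2 = h := by omega
  rw [dotProduct]
  apply Finset.sum_eq_zero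
  rintro ⟨a, b⟩ -
  simp only [PsiBar, Psi, Pi.star_apply, hhalf]
  by_cases hab : a = b
  · have : ¬ (b : ℕ) = ((a : ℕ) + h) % q := by
      intro hc
      exact (mod_add_half_ne q h (a : ℕ) hq2 hh a.isLt) (by rw [← hc, hab])
    simp [this]
  · simp [hab]

lemma orth3 (q : ℕ) (hq : 2 ≤ q) (heven : Even q) :
    dotProduct (star (PhiPlus q)) (Psi q) = 0 := by
  obtain ⟨h, hqh⟩ := heven
  have hq2 : q = 2 * h := by omega
  have hh : 0 < h := by omega
  have hhalf : q / 2 = h := by omega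
  rw [dotProduct]
  apply Finset.sum_eq_zero
  rintro ⟨a, b⟩ -
  simp only [PhiPlus, Psi, Pi.star_apply, hhalf]
  by_cases hab : a = b
  · have : ¬ (b : ℕ) = ((a : ℕ) + h) % q := by
      intro hc
      exact (mod_add_half_ne q h (a : ℕ) hq2 hh a.isLt) (by rw [← hc, hab])
    simp [this]
  · simp [hab]

lemma normPhi (q : ℕ) (hq : 2 ≤ q) :
    dotProduct (star (PhiPlus q)) (PhiPlus q) = 1 := by
  have hq0 : 0 < q := by omega
  have hqC : (q : ℂ) ≠ 0 := Nat.cast_ne_zero.mpr (by omega)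
  have hs := sqrt_inv_sq q hq0
  rw [dotProduct, Fintype.sum_prod_type]
  have hterm : ∀ a b : Fin q, star (PhiPlus q) (a, b) * PhiPlus q (a, b) =
      if a = b then (q : ℂ)⁻¹ else 0 := by
    intro a b
    simp only [PhiPlus, Pi.star_apply]
    by_cases hab : a = b
    · rw [if_pos hab, if_pos hab]
      simp only [Complex.star_def, map_inv₀, Complex.conj_ofReal]
      exact hs
    · simp [hab]
  simp only [hterm]
  simp only [Finset.sum_ite_eq, Finset.mem_univ, if_true]
  rw [Finset.sum_const, Finset.card_univ, Fintype.card_fin, nsmul_eq_mul,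
    mul_inv_cancel₀ hqC]

/-- for even `q`, `M₊[U_C] = |Φ⁺⟩⟨Φ⁺| + |Ψ⟩⟨Ψ̄|`; the three
inner products `⟨Ψ̄|Φ⁺⟩`, `⟨Ψ̄|Ψ⟩`, `⟨Φ⁺|Ψ⟩` vanish, and consequently
`M₊[U_C]ⁿ = |Φ⁺⟩⟨Φ⁺|` for all `n ≥ 2`. -/
theorem catMap_channel_even (q : ℕ) (hq : 2 ≤ q) (heven : Even q) :
    Mplus (catMap q) =
        vecMulVec (PhiPlus q) (star (PhiPlus q)) + vecMulVec (Psi q) (star (PsiBar q)) ∧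
    (dotProduct (star (PsiBar q)) (PhiPlus q) = 0 ∧
      dotProduct (star (PsiBar q)) (Psi q) = 0 ∧
      dotProduct (star (PhiPlus q)) (Psi q) = 0) ∧
    ∀ n : ℕ, 2 ≤ n → (Mplus (catMap q)) ^ n = vecMulVec (PhiPlus q) (star (PhiPlus q)) := by
  have hP1 := part1 q hq heven
  refine ⟨hP1, ⟨orth1 q hq heven, orth2 q hq heven, orth3 q hq heven⟩, ?_⟩
  set P := vecMulVec (PhiPlus q) (star (PhiPlus q)) with hPdef
  set Q := vecMulVec (Psi q) (star (PsiBar q)) with hQdef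
  have hPP : P * P = P := by
    rw [hPdef, vmv_mul, normPhi q hq, one_smul]
  have hPQ : P * Q = 0 := by
    rw [hPdef, hQdef, vmv_mul, orth3 q hq heven, zero_smul]
  have hQP : Q * P = 0 := by
    rw [hPdef, hQdef, vmv_mul, orth1 q hq heven, zero_smul]
  have hQQ : Q * Q = 0 := by
    rw [hQdef, vmv_mul, orth2 q hq heven, zero_smul]
  have hM2 : Mplus (catMap q) ^ 2 = P := by
    rw [sq, hP1, add_mul, mul_add, mul_add, hPP, hPQ, hQP, hQQ]
    simp
  have hPM : P * Mplus (catMap q) = P := by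
    rw [hP1, mul_add, hPP, hPQ, add_zero]
  intro n
  induction n with
  | zero => intro hn; omega
  | succ m ih =>
    intro hn
    rcases Nat.lt_or_ge m 2 with hm | hm
    · have hm1 : m = 1 := by omega
      subst hm1
      simpa using hM2
    · rw [pow_succ, ih hm, hPM]
end
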